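/- The set C admits an integral representation with respect to its extreme points: for every function f₀ ∈ C there exists a probability measure η on C ∩ 𝒥, defined on the σ-algebra generated by the evaluation maps f ↦ f(x), x ∈ (0,∞), such that f₀(x) = ∫_{C∩𝒥} f(x) η(df) for all x ≥ 0. -/

import Mathlib

open MeasureTheory Filter Topology Set
open scoped ENNReal NNReal

/-- The probability space `(Ω, 𝓕, P)` is atomless. -/
def Atomless {Ω : Type*} [MeasurableSpace Ω] (P : Measure Ω) : Prop :=
  ∀ A : Set Ω, MeasurableSet A → 0 < P A →
    ∃ B : Set Ω, MeasurableSet B ∧ B ⊆ A ∧ 0 < P B ∧ P B < P A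

/-- The distribution function `F_φ` of `φ`. -/
noncomputable def cdf {Ω : Type*} [MeasurableSpace Ω] (P : Measure Ω) (φ : Ω → ℝ)
    (x : ℝ) : ℝ :=
  (P {ω | φ ω ≤ x}).toReal

/-- The measure `μ` on `[0,∞)` defined by `μ(A) = E[φ; φ ∈ A]`. -/
noncomputable def muD {Ω : Type*} [MeasurableSpace Ω] (P : Measure Ω) (φ : Ω → ℝ) :
    Measure ℝ :=
  Measure.map φ (P.withDensity fun ω => ENNReal.ofReal (φ ω))

/-- The convex set `C` of all increasing functions `f : [0,∞) → [0,1]` that are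
right-continuous at every continuity point of `F_φ` and satisfy `∫ f dμ = v`.
(Functions on `[0,∞)` are modelled as functions on `ℝ` pinned by `f(x) = f(0)` for
`x < 0`.) -/
def CSet {Ω : Type*} [MeasurableSpace Ω] (P : Measure Ω) (φ : Ω → ℝ) (v : ℝ) :
    Set (ℝ → ℝ) :=
  {f | MonotoneOn f (Ici 0) ∧ (∀ x ∈ Ici (0:ℝ), f x ∈ Icc (0:ℝ) 1) ∧
    (∀ x < (0:ℝ), f x = f 0) ∧
    (∀ x ∈ Ici (0:ℝ), ContinuousAt (cdf P φ) x → ContinuousWithinAt f (Ici x) x) ∧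
    ∫ x, f x ∂(muD P φ) = v}

/-- The class `𝒥` of increasing step functions `f : [0,∞) → [0,1]` taking at most one
value in `(0,1)`: `f = β·1_{J₀} + 1_{J₁}` with `β ∈ (0,1)` and disjoint intervals
`J₀, J₁`, where `J₀` is empty or satisfies `μ(J₀) > 0`, `J₁` is empty or unbounded to the
right, and if both are nonempty, the right endpoint of `J₀` is the left endpoint of
`J₁`. -/
def JSet {Ω : Type*} [MeasurableSpace Ω] (P : Measure Ω) (φ : Ω → ℝ) : Set (ℝ → ℝ) :=
  {f | MonotoneOn f (Ici 0) ∧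
    ∃ (β : ℝ) (J0 J1 : Set ℝ), β ∈ Ioo (0:ℝ) 1 ∧
      J0 ⊆ Ici 0 ∧ J1 ⊆ Ici 0 ∧ J0.OrdConnected ∧ J1.OrdConnected ∧ Disjoint J0 J1 ∧
      (J0 = ∅ ∨ 0 < muD P φ J0) ∧
      (J1 = ∅ ∨ ¬ BddAbove J1) ∧
      (J0.Nonempty → J1.Nonempty → sSup J0 = sInf J1) ∧
      ∀ x ∈ Ici (0:ℝ),
        f x = β * J0.indicator (fun _ => (1:ℝ)) x + J1.indicator (fun _ => (1:ℝ)) x}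

set_option linter.unusedSectionVars false
set_option linter.unusedVariables false

namespace IntRep

variable (f₀ : ℝ → ℝ)

/-- Points (≥ 0) where `f₀` exceeds level `u`. -/
def Sset (u : ℝ) : Set ℝ := {y : ℝ | 0 ≤ y ∧ u < f₀ y}

noncomputable def Qpt (u : ℝ) : ℝ := sInf (Sset f₀ u)

open Classical in
noncomputable def Rset (u : ℝ) : Set ℝ :=
  if (Sset f₀ u).Nonempty then
    (if u ≤ f₀ (Qpt f₀ u) then Ici (Qpt f₀ u) else Ioi (Qpt f₀ u)) else ∅

/-- The layer function at level `u`. -/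
noncomputable def hfun (u x : ℝ) : ℝ := (Rset f₀ u).indicator (fun _ => 1) (max x 0)

variable {f₀}

lemma Sset_bddBelow (u : ℝ) : BddBelow (Sset f₀ u) := ⟨0, fun _ hy => hy.1⟩

lemma Qpt_nonneg {u : ℝ} (h : (Sset f₀ u).Nonempty) : 0 ≤ Qpt f₀ u :=
  le_csInf h fun _ hy => hy.1

lemma hfun_nonneg (u x : ℝ) : 0 ≤ hfun f₀ u x :=
  indicator_nonneg (fun _ _ => zero_le_one) _

lemma hfun_eq_or (u x : ℝ) : hfun f₀ u x = 0 ∨ hfun f₀ u x = 1 := by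
  unfold hfun
  by_cases h : max x 0 ∈ Rset f₀ u
  · exact Or.inr (indicator_of_mem h _)
  · exact Or.inl (indicator_of_notMem h _)

lemma hfun_le_one (u x : ℝ) : hfun f₀ u x ≤ 1 := by
  rcases hfun_eq_or (f₀ := f₀) u x with h | h <;> rw [h]; exact zero_le_one

lemma hfun_max (u x : ℝ) : hfun f₀ u (max x 0) = hfun f₀ u x := by
  unfold hfun
  rw [max_eq_left (le_max_right x 0)]

lemma hfun_neg {x : ℝ} (hx : x < 0) (u : ℝ) : hfun f₀ u x = hfun f₀ u 0 := by
  unfold hfun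
  rw [max_eq_right hx.le, max_self]

lemma mem_Rset_of_lt (hm : Monotone f₀) {u x : ℝ} (hx : 0 ≤ x) (h : u < f₀ x) :
    x ∈ Rset f₀ u := by
  have hxS : x ∈ Sset f₀ u := ⟨hx, h⟩
  have hne : (Sset f₀ u).Nonempty := ⟨x, hxS⟩
  have hQx : Qpt f₀ u ≤ x := csInf_le (Sset_bddBelow u) hxS
  rw [Rset, if_pos hne]
  rcases eq_or_lt_of_le hQx with heq | hlt
  · rw [if_pos (by rw [heq]; exact h.le)]
    exact hQx
  · by_cases hc : u ≤ f₀ (Qpt f₀ u)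
    · rw [if_pos hc]; exact hQx
    · rw [if_neg hc]; exact hlt

lemma le_Qpt_of_lt (hm : Monotone f₀) {u x : ℝ} (h : f₀ x < u)
    (hne : (Sset f₀ u).Nonempty) : x ≤ Qpt f₀ u := by
  refine le_csInf hne fun z hz => ?_
  by_contra hlt
  push_neg at hlt
  exact absurd (lt_trans hz.2 (lt_of_le_of_lt (hm hlt.le) h)) (lt_irrefl u)

lemma not_mem_Rset_of_lt (hm : Monotone f₀) {u x : ℝ} (h : f₀ x < u) :
    x ∉ Rset f₀ u := by
  rw [Rset]
  split_ifs with hne hc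
  · have hxQ : x ≤ Qpt f₀ u := le_Qpt_of_lt hm h hne
    rcases eq_or_lt_of_le hxQ with heq | hlt
    · exfalso; rw [← heq] at hc; exact absurd (lt_of_le_of_lt hc h) (lt_irrefl u)
    · exact fun hmem => absurd (lt_of_lt_of_le hlt hmem) (lt_irrefl x)
  · exact fun hmem => absurd (lt_of_le_of_lt (le_Qpt_of_lt hm h hne) hmem) (lt_irrefl x)
  · exact notMem_empty x

lemma hfun_one_of_lt (hm : Monotone f₀) {u x : ℝ} (hx : 0 ≤ x) (h : u < f₀ x) :
    hfun f₀ u x = 1 := by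
  unfold hfun
  rw [max_eq_left hx]
  exact indicator_of_mem (mem_Rset_of_lt hm hx h) _

lemma hfun_zero_of_lt (hm : Monotone f₀) {u x : ℝ} (hx : 0 ≤ x) (h : f₀ x < u) :
    hfun f₀ u x = 0 := by
  unfold hfun
  rw [max_eq_left hx]
  exact indicator_of_notMem (not_mem_Rset_of_lt hm h) _

lemma le_of_hfun_eq_one (hm : Monotone f₀) {u x : ℝ} (hx : 0 ≤ x)
    (h : hfun f₀ u x = 1) : u ≤ f₀ x := by
  by_contra hlt
  push_neg at hlt
  rw [hfun_zero_of_lt hm hx hlt] at h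
  exact absurd h (by norm_num)

lemma hfun_anti (hm : Monotone f₀) (x : ℝ) : Antitone fun u => hfun f₀ u x := by
  intro u u' huu'
  show hfun f₀ u' x ≤ hfun f₀ u x
  rcases hfun_eq_or (f₀ := f₀) u' x with h0 | h1
  · rw [h0]; exact hfun_nonneg u x
  · rw [h1]
    rw [← hfun_max] at h1 ⊢
    have hy : (0:ℝ) ≤ max x 0 := le_max_right x 0
    have hle : u' ≤ f₀ (max x 0) := le_of_hfun_eq_one hm hy h1
    rcases eq_or_lt_of_le huu' with heq | hlt
    · rw [heq, h1]
    · rw [hfun_one_of_lt hm hy (lt_of_lt_of_le hlt hle)]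

lemma Rset_upper {u z z' : ℝ} (hz : z ∈ Rset f₀ u) (hle : z ≤ z') : z' ∈ Rset f₀ u := by
  rw [Rset] at hz ⊢
  split_ifs at hz ⊢ with hne hc
  · exact le_trans hz hle
  · exact lt_of_lt_of_le hz hle
  · exact absurd hz (notMem_empty z)

lemma hfun_mono (u : ℝ) : Monotone (hfun f₀ u) := by
  intro x y hxy
  rcases hfun_eq_or (f₀ := f₀) u x with h0 | h1
  · rw [h0]; exact hfun_nonneg u y
  · rw [h1]
    have hmem : max x 0 ∈ Rset f₀ u := by
      by_contra hnm
      rw [hfun, indicator_of_notMem hnm] at h1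
      exact absurd h1 (by norm_num)
    have : max y 0 ∈ Rset f₀ u := Rset_upper hmem (max_le_max hxy (le_refl 0))
    rw [hfun, indicator_of_mem this]

lemma Rset_measurableSet (u : ℝ) : MeasurableSet (Rset f₀ u) := by
  rw [Rset]
  split_ifs
  · exact measurableSet_Ici
  · exact measurableSet_Ioi
  · exact MeasurableSet.empty

lemma hfun_measurable (u : ℝ) : Measurable (hfun f₀ u) :=
  (Measurable.indicator measurable_const (Rset_measurableSet u)).comp
    (measurable_id.max measurable_const)

lemma hfun_measurable_u (hm : Monotone f₀) (x : ℝ) :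
    Measurable fun u => hfun f₀ u x := by
  classical
  have hx0 : (0:ℝ) ≤ max x 0 := le_max_right _ _
  set c := f₀ (max x 0) with hc
  set A : Set ℝ := Iio c ∪ ({c} ∩ {u | hfun f₀ u x = 1}) with hA
  have heq : (fun u => hfun f₀ u x) = A.indicator (fun _ => (1:ℝ)) := by
    funext u
    by_cases hmem : u ∈ A
    · rw [indicator_of_mem hmem]
      rcases hmem with h | h
      · rw [← hfun_max]; exact hfun_one_of_lt hm hx0 h
      · exact h.2
    · rw [indicator_of_notMem hmem]
      rcases lt_trichotomy u c with h | h | h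
      · exact absurd ((mem_union u (Iio c) ({c} ∩ {u | hfun f₀ u x = 1})).2 (Or.inl h)) hmem
      · rcases hfun_eq_or (f₀ := f₀) u x with h0 | h1
        · exact h0
        · exact absurd ((mem_union u (Iio c) ({c} ∩ {u | hfun f₀ u x = 1})).2 (Or.inr ⟨mem_singleton_iff.2 h, h1⟩)) hmem
      · rw [← hfun_max]; exact hfun_zero_of_lt hm hx0 h
  rw [heq]
  exact Measurable.indicator measurable_const
    (measurableSet_Iio.union (((countable_singleton c).mono inter_subset_left).measurableSet))

lemma Qpt_forall_gt (hm : Monotone f₀) {u : ℝ} (hne : (Sset f₀ u).Nonempty)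
    {y : ℝ} (hy : Qpt f₀ u < y) : u < f₀ y := by
  obtain ⟨z, hzS, hz⟩ := (csInf_lt_iff (Sset_bddBelow u) hne).1 hy
  exact lt_of_lt_of_le hzS.2 (hm hz.le)

lemma hfun_rc {cont : ℝ → Prop} (hm : Monotone f₀)
    (hrc : ∀ a, 0 ≤ a → cont a → ContinuousWithinAt f₀ (Ici a) a)
    {x : ℝ} (hx : 0 ≤ x) (hc : cont x) (u : ℝ) :
    ContinuousWithinAt (hfun f₀ u) (Ici x) x := by
  have heq : ∀ y ∈ Ici x, (Rset f₀ u).indicator (fun _ => (1:ℝ)) y = hfun f₀ u y := by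
    intro y hy
    rw [hfun, max_eq_left (le_trans hx hy)]
  have hx' : (Rset f₀ u).indicator (fun _ => (1:ℝ)) x = hfun f₀ u x := heq x self_mem_Ici
  refine ContinuousWithinAt.congr ?_ (fun y hy => (heq y hy).symm) hx'.symm
  -- continuity of the ray indicator within `Ici x` at `x`
  rw [Rset]
  split_ifs with hne hcl
  · -- closed ray `Ici (Qpt f₀ u)`
    rcases le_or_gt (Qpt f₀ u) x with hax | hxa
    · refine (continuousWithinAt_const (b := (1:ℝ))).congr (fun y hy => ?_) ?_
      · exact indicator_of_mem (le_trans hax hy) _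
      · exact indicator_of_mem hax _
    · refine (continuousWithinAt_const (b := (0:ℝ))).congr_of_eventuallyEq ?_ ?_
      · refine eventually_of_mem (inter_mem_nhdsWithin (Ici x) (Iio_mem_nhds hxa)) ?_
        intro y hy
        exact indicator_of_notMem (not_le.2 hy.2) _
      · exact indicator_of_notMem (not_le.2 hxa) _
  · -- open ray `Ioi (Qpt f₀ u)`
    rcases lt_trichotomy x (Qpt f₀ u) with hxa | hxa | hxa
    · refine (continuousWithinAt_const (b := (0:ℝ))).congr_of_eventuallyEq ?_ ?_
      · refine eventually_of_mem (inter_mem_nhdsWithin (Ici x) (Iio_mem_nhds hxa)) ?_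
        intro y hy
        exact indicator_of_notMem (fun hmem => absurd (lt_trans hmem hy.2) (lt_irrefl _)) _
      · exact indicator_of_notMem (fun hmem => absurd (lt_trans hmem hxa) (lt_irrefl _)) _
    · -- x = Qpt: contradiction with continuity of f₀ at x
      exfalso
      push_neg at hcl
      have hfx : f₀ x < u := by rw [hxa]; exact hcl
      have h1 : ∀ᶠ y in 𝓝[Ici x] x, f₀ y < u :=
        (hrc x hx hc).eventually_lt_const hfx
      have h1' : ∀ᶠ y in 𝓝[Ioi x] x, f₀ y < u :=
        h1.filter_mono (nhdsWithin_mono x Ioi_subset_Ici_self)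
      have h2 : ∀ᶠ y in 𝓝[Ioi x] x, u < f₀ y := by
        refine eventually_of_mem self_mem_nhdsWithin fun y hy => ?_
        exact Qpt_forall_gt hm hne (by rw [← hxa]; exact hy)
      obtain ⟨y, hy1, hy2⟩ := (h1'.and h2).exists
      exact absurd hy2 (not_lt.2 hy1.le)
    · refine (continuousWithinAt_const (b := (1:ℝ))).congr (fun y hy => ?_) ?_
      · exact indicator_of_mem (lt_of_lt_of_le hxa hy) _
      · exact indicator_of_mem hxa _
  · exact (continuousWithinAt_const (b := (0:ℝ))).congr
      (fun y _ => indicator_of_notMem (notMem_empty y) _)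
      (indicator_of_notMem (notMem_empty x) _)


section Mfun

variable {f₀ : ℝ → ℝ} (μ : Measure ℝ)

/-- The set where the layer function equals 1. -/
def Eset (f₀ : ℝ → ℝ) (u : ℝ) : Set ℝ := {x | hfun f₀ u x = 1}

lemma Eset_measurableSet (u : ℝ) : MeasurableSet (Eset f₀ u) :=
  hfun_measurable u (measurableSet_singleton 1)

lemma hfun_eq_indicator (u : ℝ) :
    hfun f₀ u = (Eset f₀ u).indicator (fun _ => (1:ℝ)) := by
  funext x
  rcases hfun_eq_or (f₀ := f₀) u x with h0 | h1
  · rw [h0, indicator_of_notMem]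
    intro hmem
    have h1 : hfun f₀ u x = 1 := hmem
    rw [h0] at h1; norm_num at h1
  · rw [h1]
    exact (indicator_of_mem (show x ∈ Eset f₀ u from h1) (fun _ => (1:ℝ))).symm

/-- `m(u) = ∫ h_u dμ`. -/
noncomputable def mfun (f₀ : ℝ → ℝ) (u : ℝ) : ℝ := ∫ x, hfun f₀ u x ∂μ

lemma mfun_eq_toReal (u : ℝ) : mfun μ f₀ u = (μ (Eset f₀ u)).toReal := by
  rw [mfun, hfun_eq_indicator, integral_indicator_const (1:ℝ) (Eset_measurableSet u),
    smul_eq_mul, mul_one, measureReal_def]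

lemma hfun_integrable [IsFiniteMeasure μ] (u : ℝ) : Integrable (hfun f₀ u) μ := by
  rw [hfun_eq_indicator]
  exact (integrable_const (1:ℝ)).indicator (Eset_measurableSet u)

lemma mfun_nonneg (u : ℝ) : 0 ≤ mfun μ f₀ u :=
  integral_nonneg fun x => hfun_nonneg u x

lemma mfun_le_one [IsFiniteMeasure μ] (hμ1 : μ univ = 1) (u : ℝ) : mfun μ f₀ u ≤ 1 := by
  rw [mfun_eq_toReal]
  calc (μ (Eset f₀ u)).toReal ≤ (μ univ).toReal :=
        ENNReal.toReal_mono (measure_ne_top μ _) (measure_mono (subset_univ _))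
  _ = 1 := by rw [hμ1, ENNReal.toReal_one]

lemma mfun_anti [IsFiniteMeasure μ] (hm : Monotone f₀) : Antitone (mfun μ f₀) :=
  fun _ _ h => integral_mono (hfun_integrable μ _) (hfun_integrable μ _)
    fun x => hfun_anti hm x h

lemma mfun_measurable [IsFiniteMeasure μ] (hm : Monotone f₀) : Measurable (mfun μ f₀) :=
  (mfun_anti μ hm).measurable

lemma Eset_subset (hm : Monotone f₀) (hpin : ∀ x, f₀ (max x 0) = f₀ x) (u : ℝ) :
    Eset f₀ u ⊆ {x | u ≤ f₀ x} := by
  intro x hx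
  rw [Eset, mem_setOf_eq, ← hfun_max] at hx
  rw [mem_setOf_eq, ← hpin x]
  exact le_of_hfun_eq_one hm (le_max_right x 0) hx

lemma subset_Eset (hm : Monotone f₀) (hpin : ∀ x, f₀ (max x 0) = f₀ x) (u : ℝ) :
    {x | u < f₀ x} ⊆ Eset f₀ u := by
  intro x hx
  rw [mem_setOf_eq, ← hpin x] at hx
  rw [Eset, mem_setOf_eq, ← hfun_max]
  exact hfun_one_of_lt hm (le_max_right x 0) hx

lemma f₀_integrable [IsFiniteMeasure μ] (hm : Monotone f₀) (h01 : ∀ x, f₀ x ∈ Icc (0:ℝ) 1) :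
    Integrable f₀ μ := by
  refine (integrable_const (1:ℝ)).mono' hm.measurable.aestronglyMeasurable ?_
  refine ae_of_all _ fun x => ?_
  rw [Real.norm_eq_abs, abs_of_nonneg (h01 x).1]
  exact (h01 x).2

lemma mfun_lintegral [IsFiniteMeasure μ] (hm : Monotone f₀)
    (hpin : ∀ x, f₀ (max x 0) = f₀ x) (h01 : ∀ x, f₀ x ∈ Icc (0:ℝ) 1)
    {v : ℝ} (hint : ∫ x, f₀ x ∂μ = v) :
    ∫⁻ u in Ioo (0:ℝ) 1, ENNReal.ofReal (mfun μ f₀ u) = ENNReal.ofReal v := by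
  have hf₀m : Measurable f₀ := hm.measurable
  have key : ∫⁻ t in Ioi (0:ℝ), μ {a | t < f₀ a} = ENNReal.ofReal v := by
    rw [← lintegral_eq_lintegral_meas_lt μ (ae_of_all _ fun x => (h01 x).1) hf₀m.aemeasurable,
      ← ofReal_integral_eq_lintegral_ofReal (f₀_integrable μ hm h01)
        (ae_of_all _ fun x => (h01 x).1), hint]
  have hIci : ∫⁻ t in Ici (1:ℝ), μ {a | t < f₀ a} = 0 := by
    rw [setLIntegral_congr_fun measurableSet_Ici
      ((fun t (ht : 1 ≤ t) => ?_)), lintegral_zero]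
    have hempty : {a | t < f₀ a} = ∅ := by
      refine eq_empty_iff_forall_notMem.2 fun a ha => ?_
      exact absurd (lt_of_le_of_lt (le_trans (h01 a).2 ht) ha) (lt_irrefl _)
    rw [hempty, measure_empty]
  have hsplit : Ioi (0:ℝ) = Ioo 0 1 ∪ Ici 1 := by
    ext t
    simp only [mem_Ioi, mem_union, mem_Ioo, mem_Ici]
    constructor
    · intro ht
      rcases lt_or_ge t 1 with h | h
      · exact Or.inl ⟨ht, h⟩
      · exact Or.inr h
    · rintro (⟨h, _⟩ | h)
      · exact h
      · linarith
  have hdisj : Disjoint (Ioo (0:ℝ) 1) (Ici 1) := by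
    rw [disjoint_left]
    rintro t ⟨_, h2⟩ h3
    exact absurd h3 (not_le.2 h2)
  have key2 : ∫⁻ t in Ioo (0:ℝ) 1, μ {a | t < f₀ a} = ENNReal.ofReal v := by
    rw [← key, hsplit, lintegral_union measurableSet_Ici hdisj, hIci, add_zero]
  rw [← key2]
  have hN : (volume : Measure ℝ) {t : ℝ | 0 < μ {a | f₀ a = t}} = 0 :=
    (Measure.countable_meas_level_set_pos hf₀m).measure_zero _
  have hae : ∀ᵐ t ∂(volume : Measure ℝ), μ {a | f₀ a = t} = 0 := by
    rw [ae_iff]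
    refine measure_mono_null (fun t ht => ?_) hN
    simp only [mem_setOf_eq] at ht ⊢
    exact pos_iff_ne_zero.2 ht
  refine lintegral_congr_ae (ae_restrict_of_ae ?_)
  filter_upwards [hae] with t ht
  have h1 : Eset f₀ t =ᵐ[μ] {a | t < f₀ a} := by
    rw [ae_eq_set]
    constructor
    · refine measure_mono_null (fun x hx => ?_) ht
      exact le_antisymm (not_lt.1 hx.2) (Eset_subset hm hpin t hx.1)
    · refine measure_mono_null (fun x hx => ?_) ht
      exact absurd (subset_Eset hm hpin t hx.1) hx.2
  rw [mfun_eq_toReal, ENNReal.ofReal_toReal (measure_ne_top μ _), measure_congr h1]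

lemma mfun_setIntegral [IsFiniteMeasure μ] (hm : Monotone f₀)
    (hpin : ∀ x, f₀ (max x 0) = f₀ x) (h01 : ∀ x, f₀ x ∈ Icc (0:ℝ) 1)
    {v : ℝ} (hv0 : 0 ≤ v) (hint : ∫ x, f₀ x ∂μ = v) :
    ∫ u in Ioo (0:ℝ) 1, mfun μ f₀ u = v := by
  rw [integral_eq_lintegral_of_nonneg_ae (ae_of_all _ fun u => mfun_nonneg μ u)
    ((mfun_measurable μ hm).aestronglyMeasurable),
    mfun_lintegral μ hm hpin h01 hint, ENNReal.toReal_ofReal hv0]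

end Mfun


section Quantile

variable {g : ℝ → ℝ}

/-- The measure with density `g` on `(0,1)`. -/
noncomputable def nug (g : ℝ → ℝ) : Measure ℝ :=
  (volume.restrict (Ioo 0 1)).withDensity fun u => ENNReal.ofReal (g u)

/-- Cumulative function of `nug`. -/
noncomputable def Gfun (g : ℝ → ℝ) (c : ℝ) : ℝ := (nug g (Iic c)).toReal

/-- Right-continuous quantile-type inverse of `Gfun`. -/
noncomputable def qfun (g : ℝ → ℝ) (s : ℝ) : ℝ :=
  sSup {u | u ∈ Icc (0:ℝ) 1 ∧ Gfun g u ≤ s}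

lemma nug_apply (hgm : Measurable g) {s : Set ℝ} (hs : MeasurableSet s) :
    nug g s = ∫⁻ u in s ∩ Ioo 0 1, ENNReal.ofReal (g u) := by
  rw [nug, withDensity_apply _ hs, Measure.restrict_restrict hs]

lemma nug_le (hgm : Measurable g) (hg1 : ∀ u, g u ≤ 1) {s : Set ℝ} (hs : MeasurableSet s) :
    nug g s ≤ volume (s ∩ Ioo 0 1) := by
  rw [nug_apply hgm hs]
  calc ∫⁻ u in s ∩ Ioo 0 1, ENNReal.ofReal (g u)
      ≤ ∫⁻ _ in s ∩ Ioo 0 1, 1 :=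
        lintegral_mono fun u => ENNReal.ofReal_le_one.2 (hg1 u)
  _ = volume (s ∩ Ioo 0 1) := setLIntegral_one _

lemma nug_ne_top (hgm : Measurable g) (hg1 : ∀ u, g u ≤ 1) (s : Set ℝ) :
    nug g s ≠ ⊤ := by
  refine ne_top_of_le_ne_top ?_ (measure_mono (subset_univ s))
  have h1 : nug g univ ≤ volume (Ioo (0:ℝ) 1) := by
    have := nug_le hgm hg1 (s := univ) MeasurableSet.univ
    rwa [univ_inter] at this
  refine ne_top_of_le_ne_top ?_ h1
  rw [Real.volume_Ioo]; exact ENNReal.ofReal_ne_top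

lemma nug_isFiniteMeasure (hgm : Measurable g) (hg1 : ∀ u, g u ≤ 1) :
    IsFiniteMeasure (nug g) :=
  ⟨lt_top_iff_ne_top.2 (nug_ne_top hgm hg1 univ)⟩

lemma Gfun_nonneg (c : ℝ) : 0 ≤ Gfun g c := ENNReal.toReal_nonneg

lemma Gfun_mono (hgm : Measurable g) (hg1 : ∀ u, g u ≤ 1) : Monotone (Gfun g) :=
  fun _ _ h => ENNReal.toReal_mono (nug_ne_top hgm hg1 _)
    (measure_mono (Iic_subset_Iic.2 h))

lemma nug_Iic (hgm : Measurable g) (hg1 : ∀ u, g u ≤ 1) (c : ℝ) :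
    nug g (Iic c) = ENNReal.ofReal (Gfun g c) :=
  (ENNReal.ofReal_toReal (nug_ne_top hgm hg1 _)).symm

lemma Gfun_add (hgm : Measurable g) (hg1 : ∀ u, g u ≤ 1) {c c' : ℝ} (h : c ≤ c') :
    Gfun g c' = Gfun g c + (nug g (Ioc c c')).toReal := by
  rw [Gfun, Gfun, ← Iic_union_Ioc_eq_Iic h,
    measure_union (Iic_disjoint_Ioc le_rfl) measurableSet_Ioc,
    ENNReal.toReal_add (nug_ne_top hgm hg1 _) (nug_ne_top hgm hg1 _)]

lemma Gfun_zero_of_nonpos (hgm : Measurable g) {c : ℝ} (hc : c ≤ 0) : Gfun g c = 0 := by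
  rw [Gfun, nug_apply hgm measurableSet_Iic]
  have hempty : Iic c ∩ Ioo (0:ℝ) 1 = ∅ := by
    refine eq_empty_iff_forall_notMem.2 fun u hu => ?_
    exact absurd (lt_of_le_of_lt (le_trans hu.1 hc) hu.2.1) (lt_irrefl u)
  rw [hempty, Measure.restrict_empty, lintegral_zero_measure, ENNReal.toReal_zero]

lemma Gfun_lipschitz (hgm : Measurable g) (hg1 : ∀ u, g u ≤ 1) :
    ∀ c c', c ≤ c' → Gfun g c' - Gfun g c ≤ c' - c ∧ 0 ≤ Gfun g c' - Gfun g c := by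
  intro c c' h
  rw [Gfun_add hgm hg1 h]
  constructor
  · have h1 : nug g (Ioc c c') ≤ ENNReal.ofReal (c' - c) := by
      calc nug g (Ioc c c') ≤ volume (Ioc c c' ∩ Ioo 0 1) := nug_le hgm hg1 measurableSet_Ioc
      _ ≤ volume (Ioc c c') := measure_mono inter_subset_left
      _ = ENNReal.ofReal (c' - c) := Real.volume_Ioc
    have := ENNReal.toReal_mono ENNReal.ofReal_ne_top h1
    rw [ENNReal.toReal_ofReal (by linarith)] at this
    linarith
  · have : (0:ℝ) ≤ (nug g (Ioc c c')).toReal := ENNReal.toReal_nonneg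
    linarith

lemma Gfun_continuous (hgm : Measurable g) (hg1 : ∀ u, g u ≤ 1) : Continuous (Gfun g) := by
  refine (LipschitzWith.of_dist_le_mul (K := 1) fun c c' => ?_).continuous
  rw [NNReal.coe_one, one_mul, Real.dist_eq, Real.dist_eq]
  rcases le_total c c' with h | h
  · obtain ⟨h1, h2⟩ := Gfun_lipschitz hgm hg1 c c' h
    rw [abs_of_nonpos (by linarith), abs_of_nonpos (by linarith)]
    linarith
  · obtain ⟨h1, h2⟩ := Gfun_lipschitz hgm hg1 c' c h
    rw [abs_of_nonneg (by linarith), abs_of_nonneg (by linarith)]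
    linarith

lemma setq_nonempty (hgm : Measurable g) {s : ℝ} (hs : 0 ≤ s) :
    {u | u ∈ Icc (0:ℝ) 1 ∧ Gfun g u ≤ s}.Nonempty :=
  ⟨0, ⟨le_refl 0, zero_le_one⟩, by rw [Gfun_zero_of_nonpos hgm le_rfl]; exact hs⟩

lemma setq_bddAbove : BddAbove {u | u ∈ Icc (0:ℝ) 1 ∧ Gfun g u ≤ s} :=
  ⟨1, fun _ hu => hu.1.2⟩

lemma setq_closed (hgm : Measurable g) (hg1 : ∀ u, g u ≤ 1) (s : ℝ) :
    IsClosed {u | u ∈ Icc (0:ℝ) 1 ∧ Gfun g u ≤ s} := by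
  have : {u | u ∈ Icc (0:ℝ) 1 ∧ Gfun g u ≤ s} = Icc 0 1 ∩ (Gfun g) ⁻¹' (Iic s) := rfl
  rw [this]
  exact isClosed_Icc.inter (isClosed_Iic.preimage (Gfun_continuous hgm hg1))

lemma qfun_mem (hgm : Measurable g) (hg1 : ∀ u, g u ≤ 1) {s : ℝ} (hs : 0 ≤ s) :
    qfun g s ∈ Icc (0:ℝ) 1 ∧ Gfun g (qfun g s) ≤ s :=
  (setq_closed hgm hg1 s).csSup_mem (setq_nonempty hgm hs) setq_bddAbove

lemma qfun_mono (hgm : Measurable g) : Monotone (qfun g) := by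
  intro s s' h
  rcases le_or_gt 0 s with hs | hs
  · exact csSup_le_csSup setq_bddAbove (setq_nonempty hgm hs)
      (fun u hu => ⟨hu.1, le_trans hu.2 h⟩)
  · have hempty : {u | u ∈ Icc (0:ℝ) 1 ∧ Gfun g u ≤ s} = ∅ := by
      refine eq_empty_iff_forall_notMem.2 fun u hu => ?_
      exact absurd (lt_of_le_of_lt hu.2 hs) (not_lt.2 (Gfun_nonneg u))
    rw [qfun, hempty, Real.sSup_empty]
    rcases le_or_gt 0 s' with hs' | hs'
    · exact le_csSup setq_bddAbove ⟨⟨le_refl 0, zero_le_one⟩,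
        by rw [Gfun_zero_of_nonpos hgm le_rfl]; exact hs'⟩
    · have hempty' : {u | u ∈ Icc (0:ℝ) 1 ∧ Gfun g u ≤ s'} = ∅ := by
        refine eq_empty_iff_forall_notMem.2 fun u hu => ?_
        exact absurd (lt_of_le_of_lt hu.2 hs') (not_lt.2 (Gfun_nonneg u))
      rw [qfun, hempty', Real.sSup_empty]

lemma qfun_measurable (hgm : Measurable g) : Measurable (qfun g) :=
  (qfun_mono hgm).measurable

lemma Gfun_qfun (hgm : Measurable g) (hg1 : ∀ u, g u ≤ 1) {s : ℝ}
    (hs0 : 0 ≤ s) (hs1 : s < Gfun g 1) : Gfun g (qfun g s) = s := by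
  obtain ⟨hqmem, hqle⟩ := qfun_mem hgm hg1 hs0
  set q := qfun g s with hqdef
  have hq1 : q < 1 := by
    rcases eq_or_lt_of_le hqmem.2 with heq | hlt
    · exfalso; rw [heq] at hqle; exact absurd hs1 (not_lt.2 hqle)
    · exact hlt
  by_contra hne
  have hGq : Gfun g q < s := lt_of_le_of_ne hqle hne
  obtain ⟨δ, hδpos, hδ⟩ := Metric.continuousAt_iff.1
    ((Gfun_continuous hgm hg1).continuousAt (x := q)) (s - Gfun g q) (by linarith)
  set u := min (q + δ/2) ((q+1)/2) with hu
  have hu1 : q < u := lt_min (by linarith) (by linarith)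
  have hu2 : u ≤ 1 := le_trans (min_le_right _ _) (by linarith)
  have hu3 : dist u q < δ := by
    rw [Real.dist_eq, abs_of_pos (by linarith)]
    calc u - q ≤ (q + δ/2) - q := by
          have := min_le_left (q + δ/2) ((q+1)/2); linarith
    _ < δ := by linarith
  have hGu : Gfun g u < s := by
    have := hδ hu3
    rw [Real.dist_eq] at this
    have h2 : Gfun g u - Gfun g q < s - Gfun g q := lt_of_le_of_lt (le_abs_self _) this
    linarith
  have hmem : u ∈ {u | u ∈ Icc (0:ℝ) 1 ∧ Gfun g u ≤ s} :=
    ⟨⟨le_trans hqmem.1 hu1.le, hu2⟩, hGu.le⟩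
  exact absurd (le_csSup setq_bddAbove hmem) (not_le.2 hu1)

lemma qfun_ge_self (hu : u ∈ Icc (0:ℝ) 1) : u ≤ qfun g (Gfun g u) :=
  le_csSup setq_bddAbove ⟨hu, le_rfl⟩

lemma Gfun_qfun_self (hgm : Measurable g) (hg1 : ∀ u, g u ≤ 1) {u : ℝ}
    (hu : u ∈ Icc (0:ℝ) 1) : Gfun g (qfun g (Gfun g u)) = Gfun g u :=
  le_antisymm (qfun_mem hgm hg1 (Gfun_nonneg u)).2
    (Gfun_mono hgm hg1 (qfun_ge_self hu))

lemma map_Gfun (hgm : Measurable g) (hg1 : ∀ u, g u ≤ 1) :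
    Measure.map (Gfun g) (nug g) = volume.restrict (Ioo 0 (Gfun g 1)) := by
  haveI := nug_isFiniteMeasure hgm hg1
  haveI : IsFiniteMeasure (Measure.map (Gfun g) (nug g)) :=
    Measure.isFiniteMeasure_map _ _
  refine Measure.ext_of_Iic _ _ fun t => ?_
  rw [Measure.map_apply (Gfun_continuous hgm hg1).measurable measurableSet_Iic,
    Measure.restrict_apply measurableSet_Iic]
  rcases lt_or_ge t 0 with ht | ht
  · have h1 : Gfun g ⁻¹' Iic t = ∅ := by
      refine eq_empty_iff_forall_notMem.2 fun u hu => ?_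
      exact absurd (lt_of_le_of_lt hu ht) (not_lt.2 (Gfun_nonneg u))
    have h2 : Iic t ∩ Ioo 0 (Gfun g 1) = ∅ := by
      refine eq_empty_iff_forall_notMem.2 fun u hu => ?_
      exact absurd (lt_of_le_of_lt hu.1 ht) (not_lt.2 hu.2.1.le)
    rw [h1, h2, measure_empty, measure_empty]
  rcases lt_or_ge t (Gfun g 1) with ht1 | ht1
  · have hset : (Gfun g ⁻¹' Iic t) ∩ Ioo 0 1 = Iic (qfun g t) ∩ Ioo 0 1 := by
      ext u
      simp only [mem_inter_iff, mem_preimage, mem_Iic, mem_Ioo]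
      constructor
      · rintro ⟨h1, h2⟩
        exact ⟨le_csSup setq_bddAbove ⟨⟨h2.1.le, h2.2.le⟩, h1⟩, h2⟩
      · rintro ⟨h1, h2⟩
        refine ⟨le_trans (Gfun_mono hgm hg1 h1) ?_, h2⟩
        rw [Gfun_qfun hgm hg1 ht ht1]
    have hval : nug g (Gfun g ⁻¹' Iic t) = ENNReal.ofReal t := by
      rw [nug_apply hgm ((Gfun_continuous hgm hg1).measurable measurableSet_Iic), hset,
        ← nug_apply hgm measurableSet_Iic, nug_Iic hgm hg1, Gfun_qfun hgm hg1 ht ht1]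
    have hset2 : Iic t ∩ Ioo 0 (Gfun g 1) = Ioc 0 t := by
      ext u
      simp only [mem_inter_iff, mem_Iic, mem_Ioo, mem_Ioc]
      constructor
      · rintro ⟨h1, h2, _⟩; exact ⟨h2, h1⟩
      · rintro ⟨h1, h2⟩; exact ⟨h2, h1, lt_of_le_of_lt h2 ht1⟩
    rw [hval, hset2, Real.volume_Ioc, sub_zero]
  · have hset : (Gfun g ⁻¹' Iic t) ∩ Ioo 0 1 = Ioo 0 1 := by
      refine inter_eq_right.2 fun u hu => ?_
      exact le_trans (Gfun_mono hgm hg1 hu.2.le) ht1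
    have hval : nug g (Gfun g ⁻¹' Iic t) = ENNReal.ofReal (Gfun g 1) := by
      rw [nug_apply hgm ((Gfun_continuous hgm hg1).measurable measurableSet_Iic), hset,
        ← inter_eq_right.2 (fun u (hu : u ∈ Ioo (0:ℝ) 1) => (mem_Iic.2 hu.2.le)),
        ← nug_apply hgm measurableSet_Iic, nug_Iic hgm hg1]
    have hset2 : Iic t ∩ Ioo 0 (Gfun g 1) = Ioo 0 (Gfun g 1) := by
      refine inter_eq_right.2 fun u hu => le_trans hu.2.le ht1
    rw [hval, hset2, Real.volume_Ioo, sub_zero]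

end Quantile


section Bad

variable {g : ℝ → ℝ}

lemma flat_zero (hgm : Measurable g) (hg1 : ∀ u, g u ≤ 1) {u : ℝ}
    (hu : u ∈ Ioo (0:ℝ) 1) (hq : u < qfun g (Gfun g u)) :
    volume {t | t ∈ Ioo u (qfun g (Gfun g u)) ∧ 0 < g t} = 0 := by
  set q := qfun g (Gfun g u) with hqdef
  have hq1 : q ≤ 1 := (qfun_mem hgm hg1 (Gfun_nonneg u)).1.2
  have h0 : nug g (Ioc u q) = 0 := by
    have hGadd := Gfun_add hgm hg1 hq.le
    rw [Gfun_qfun_self hgm hg1 ⟨hu.1.le, hu.2.le⟩] at hGadd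
    have h1 : (nug g (Ioc u q)).toReal = 0 := by linarith
    rcases (ENNReal.toReal_eq_zero_iff _).1 h1 with h | h
    · exact h
    · exact absurd h (nug_ne_top hgm hg1 _)
  rw [nug_apply hgm measurableSet_Ioc] at h0
  have h2 : ∀ᵐ t ∂(volume.restrict (Ioc u q ∩ Ioo 0 1)), ENNReal.ofReal (g t) = 0 :=
    (lintegral_eq_zero_iff (ENNReal.measurable_ofReal.comp hgm)).1 h0
  have h3 : ∀ᵐ t ∂(volume.restrict (Ioc u q ∩ Ioo 0 1)), ¬ (0 < g t) := by
    filter_upwards [h2] with t ht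
    rw [ENNReal.ofReal_eq_zero] at ht
    exact not_lt.2 ht
  rw [ae_restrict_iff' (measurableSet_Ioc.inter measurableSet_Ioo), ae_iff] at h3
  refine measure_mono_null (fun t ht => ?_) h3
  have htIoc : t ∈ Ioc u q ∩ Ioo 0 1 :=
    ⟨⟨ht.1.1, ht.1.2.le⟩, ⟨lt_trans hu.1 ht.1.1, lt_of_lt_of_le ht.1.2 hq1⟩⟩
  simp only [mem_setOf_eq, not_forall]
  exact ⟨htIoc, by simpa using ht.2⟩

lemma bad_null_anti (hgm : Measurable g) (hg1 : ∀ u, g u ≤ 1) (hga : Antitone g) :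
    volume {u | u ∈ Ioo (0:ℝ) 1 ∧ 0 < g u ∧ qfun g (Gfun g u) ≠ u} = 0 := by
  have hkey : ∀ u₁ u₂, u₁ ∈ Ioo (0:ℝ) 1 → 0 < g u₁ → qfun g (Gfun g u₁) ≠ u₁ →
      u₂ ∈ Ioo (0:ℝ) 1 → 0 < g u₂ → ¬ u₁ < u₂ := by
    intro u₁ u₂ hu₁ hg₁ hq₁ hu₂ hg₂ hlt
    have hq₁' : u₁ < qfun g (Gfun g u₁) :=
      lt_of_le_of_ne (qfun_ge_self ⟨hu₁.1.le, hu₁.2.le⟩) (Ne.symm hq₁)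
    have hnull := flat_zero hgm hg1 hu₁ hq₁'
    set c := min (qfun g (Gfun g u₁)) u₂ with hc
    have hcgt : u₁ < c := lt_min hq₁' hlt
    have hsubset : Ioo u₁ c ⊆ {t | t ∈ Ioo u₁ (qfun g (Gfun g u₁)) ∧ 0 < g t} := by
      intro t htc
      refine ⟨⟨htc.1, lt_of_lt_of_le htc.2 (min_le_left _ _)⟩, ?_⟩
      have : t ≤ u₂ := le_of_lt (lt_of_lt_of_le htc.2 (min_le_right _ _))
      exact lt_of_lt_of_le hg₂ (hga this)
    have h0 := measure_mono_null hsubset hnull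
    rw [Real.volume_Ioo] at h0
    rw [ENNReal.ofReal_eq_zero] at h0
    linarith
  have hsub : {u | u ∈ Ioo (0:ℝ) 1 ∧ 0 < g u ∧ qfun g (Gfun g u) ≠ u}.Subsingleton := by
    intro u₁ h₁ u₂ h₂
    by_contra hne
    rcases lt_or_gt_of_ne hne with h | h
    · exact hkey u₁ u₂ h₁.1 h₁.2.1 h₁.2.2 h₂.1 h₂.2.1 h
    · exact hkey u₂ u₁ h₂.1 h₂.2.1 h₂.2.2 h₁.1 h₁.2.1 h
  exact hsub.countable.measure_zero _

lemma bad_null_mono (hgm : Measurable g) (hg1 : ∀ u, g u ≤ 1) (hgmono : Monotone g) :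
    volume {u | u ∈ Ioo (0:ℝ) 1 ∧ 0 < g u ∧ qfun g (Gfun g u) ≠ u} = 0 := by
  have hempty : {u | u ∈ Ioo (0:ℝ) 1 ∧ 0 < g u ∧ qfun g (Gfun g u) ≠ u} = ∅ := by
    refine eq_empty_iff_forall_notMem.2 ?_
    rintro u ⟨hu, hg, hq⟩
    have hq' : u < qfun g (Gfun g u) :=
      lt_of_le_of_ne (qfun_ge_self ⟨hu.1.le, hu.2.le⟩) (Ne.symm hq)
    have hnull := flat_zero hgm hg1 hu hq'
    have hsubset : Ioo u (qfun g (Gfun g u)) ⊆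
        {t | t ∈ Ioo u (qfun g (Gfun g u)) ∧ 0 < g t} := by
      intro t htc
      exact ⟨htc, lt_of_lt_of_le hg (hgmono htc.1.le)⟩
    have h0 := measure_mono_null hsubset hnull
    rw [Real.volume_Ioo, ENNReal.ofReal_eq_zero] at h0
    linarith
  rw [hempty, measure_empty]

/-- Key substitution identity. -/
lemma Qmain (hgm : Measurable g) (hg0 : ∀ u, 0 ≤ g u) (hg1 : ∀ u, g u ≤ 1)
    (hbad : volume {u | u ∈ Ioo (0:ℝ) 1 ∧ 0 < g u ∧ qfun g (Gfun g u) ≠ u} = 0)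
    {ψ : ℝ → ENNReal} (hψ : Measurable ψ) :
    ∫⁻ s in Ioo 0 (Gfun g 1), ψ (qfun g s) * ENNReal.ofReal ((g (qfun g s))⁻¹) ∂volume
      = ∫⁻ u in {u | 0 < g u} ∩ Ioo 0 1, ψ u ∂volume := by
  have hgset : MeasurableSet {u | 0 < g u} := hgm measurableSet_Ioi
  have hΦ : Measurable fun s => ψ (qfun g s) * ENNReal.ofReal ((g (qfun g s))⁻¹) :=
    ((hψ.comp (qfun_measurable hgm)).mul
      (ENNReal.measurable_ofReal.comp ((hgm.comp (qfun_measurable hgm)).inv)))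
  have step1 : ∫⁻ s in Ioo 0 (Gfun g 1),
      ψ (qfun g s) * ENNReal.ofReal ((g (qfun g s))⁻¹) ∂volume
      = ∫⁻ u, ENNReal.ofReal (g u) *
        (ψ (qfun g (Gfun g u)) * ENNReal.ofReal ((g (qfun g (Gfun g u)))⁻¹))
        ∂(volume.restrict (Ioo 0 1)) := by
    rw [← map_Gfun hgm hg1, lintegral_map hΦ (Gfun_continuous hgm hg1).measurable, nug,
      lintegral_withDensity_eq_lintegral_mul _
        (show Measurable fun u => ENNReal.ofReal (g u)
          from ENNReal.measurable_ofReal.comp hgm)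
        (show Measurable fun a => ψ (qfun g (Gfun g a)) *
          ENNReal.ofReal ((g (qfun g (Gfun g a)))⁻¹)
          from hΦ.comp (Gfun_continuous hgm hg1).measurable)]
    simp only [Pi.mul_apply]
  rw [step1]
  have step2 : ∫⁻ u, ENNReal.ofReal (g u) *
      (ψ (qfun g (Gfun g u)) * ENNReal.ofReal ((g (qfun g (Gfun g u)))⁻¹))
      ∂(volume.restrict (Ioo 0 1))
      = ∫⁻ u, ({u | 0 < g u}.indicator ψ) u ∂(volume.restrict (Ioo 0 1)) := by
    refine lintegral_congr_ae ?_
    have h1 : ∀ᵐ u ∂(volume.restrict (Ioo 0 1)),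
        u ∉ {u | u ∈ Ioo (0:ℝ) 1 ∧ 0 < g u ∧ qfun g (Gfun g u) ≠ u} :=
      ae_restrict_of_ae (measure_eq_zero_iff_ae_notMem.1 hbad)
    filter_upwards [h1, ae_restrict_mem measurableSet_Ioo] with u hu hmem
    rcases le_or_gt (g u) 0 with hg | hg
    · rw [ENNReal.ofReal_eq_zero.2 hg, zero_mul,
        indicator_of_notMem (by simpa using not_lt.2 hg)]
    · have hq : qfun g (Gfun g u) = u := by
        by_contra hne
        exact hu ⟨hmem, hg, hne⟩
      rw [indicator_of_mem (show u ∈ {u | 0 < g u} from hg) ψ, hq]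
      have hinv : ENNReal.ofReal (g u) * ENNReal.ofReal ((g u)⁻¹) = 1 := by
        rw [← ENNReal.ofReal_mul (le_of_lt hg), mul_inv_cancel₀ (ne_of_gt hg),
          ENNReal.ofReal_one]
      calc ENNReal.ofReal (g u) * (ψ u * ENNReal.ofReal ((g u)⁻¹))
          = (ENNReal.ofReal (g u) * ENNReal.ofReal ((g u)⁻¹)) * ψ u := by ring
      _ = ψ u := by rw [hinv, one_mul]
  rw [step2, lintegral_indicator hgset, Measure.restrict_restrict hgset]

end Bad


section Pairing

variable (μ : Measure ℝ) (f₀ : ℝ → ℝ) (v : ℝ)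

/-- Excess density. -/
noncomputable def gex : ℝ → ℝ := fun u => max (mfun μ f₀ u - v) 0
/-- Deficit density. -/
noncomputable def gde : ℝ → ℝ := fun u => max (v - mfun μ f₀ u) 0

/-- Total excess mass. -/
noncomputable def Mtot : ℝ := Gfun (gex μ f₀ v) 1

noncomputable def aA (s : ℝ) : ℝ := gex μ f₀ v (qfun (gex μ f₀ v) s)
noncomputable def bB (s : ℝ) : ℝ := gde μ f₀ v (qfun (gde μ f₀ v) s)
noncomputable def lam (s : ℝ) : ℝ := bB μ f₀ v s / (aA μ f₀ v s + bB μ f₀ v s)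

/-- The two-step mixtures. -/
noncomputable def gmix (s x : ℝ) : ℝ :=
  lam μ f₀ v s * hfun f₀ (qfun (gex μ f₀ v) s) x
    + (1 - lam μ f₀ v s) * hfun f₀ (qfun (gde μ f₀ v) s) x

variable {μ f₀ v}

section Props

variable [IsFiniteMeasure μ] (hm : Monotone f₀) (hv : v ∈ Icc (0:ℝ) 1) (hμ1 : μ univ = 1)

lemma gex_nonneg : ∀ u, 0 ≤ gex μ f₀ v u := fun _ => le_max_right _ _
lemma gde_nonneg : ∀ u, 0 ≤ gde μ f₀ v u := fun _ => le_max_right _ _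

include hm hv hμ1 in
lemma gex_le_one : ∀ u, gex μ f₀ v u ≤ 1 := by
  intro u
  rw [gex, max_le_iff]
  have := mfun_le_one μ hμ1 (f₀ := f₀) u
  constructor <;> [linarith [hv.1]; norm_num]

include hm hv hμ1 in
lemma gde_le_one : ∀ u, gde μ f₀ v u ≤ 1 := by
  intro u
  rw [gde, max_le_iff]
  have := mfun_nonneg μ (f₀ := f₀) u
  constructor <;> [linarith [hv.2]; norm_num]

include hm in
lemma gex_anti : Antitone (gex μ f₀ v) := by
  intro u u' h
  exact max_le_max (by have := mfun_anti μ hm h; linarith) le_rfl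

include hm in
lemma gde_mono : Monotone (gde μ f₀ v) := by
  intro u u' h
  exact max_le_max (by have := mfun_anti μ hm h; linarith) le_rfl

include hm in
lemma gex_measurable : Measurable (gex μ f₀ v) := (gex_anti hm).measurable

include hm in
lemma gde_measurable : Measurable (gde μ f₀ v) := (gde_mono hm).measurable

lemma gex_pos_iff (u : ℝ) : 0 < gex μ f₀ v u ↔ v < mfun μ f₀ u := by
  rw [gex]
  constructor
  · intro h
    by_contra hc
    push_neg at hc
    rw [max_eq_right (by linarith)] at h
    exact absurd h (lt_irrefl 0)
  · intro h
    rw [max_eq_left (by linarith)]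
    linarith

lemma gde_pos_iff (u : ℝ) : 0 < gde μ f₀ v u ↔ mfun μ f₀ u < v := by
  rw [gde]
  constructor
  · intro h
    by_contra hc
    push_neg at hc
    rw [max_eq_right (by linarith)] at h
    exact absurd h (lt_irrefl 0)
  · intro h
    rw [max_eq_left (by linarith)]
    linarith

include hm hv hμ1 in
lemma bounded_integrable {gg : ℝ → ℝ} (hgm : Measurable gg) (hg0 : ∀ u, 0 ≤ gg u)
    (hg1 : ∀ u, gg u ≤ 1) : Integrable gg (volume.restrict (Ioo (0:ℝ) 1)) := by
  refine (integrable_const (1:ℝ)).mono' hgm.aestronglyMeasurable ?_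
  refine ae_of_all _ fun u => ?_
  rw [Real.norm_eq_abs, abs_of_nonneg (hg0 u)]
  exact hg1 u

include hm hv hμ1 in
lemma Gfun_one_eq {gg : ℝ → ℝ} (hgm : Measurable gg) (hg0 : ∀ u, 0 ≤ gg u)
    (hg1 : ∀ u, gg u ≤ 1) : Gfun gg 1 = ∫ u in Ioo (0:ℝ) 1, gg u := by
  rw [Gfun, nug_apply hgm measurableSet_Iic]
  have hset : Iic (1:ℝ) ∩ Ioo 0 1 = Ioo 0 1 :=
    inter_eq_right.2 fun u hu => mem_Iic.2 hu.2.le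
  rw [hset, ← ofReal_integral_eq_lintegral_ofReal
    (bounded_integrable hm hv hμ1 hgm hg0 hg1) (ae_of_all _ hg0),
    ENNReal.toReal_ofReal (integral_nonneg hg0)]

include hm hv hμ1 in
lemma Mtot_eq (hpin : ∀ x, f₀ (max x 0) = f₀ x) (h01 : ∀ x, f₀ x ∈ Icc (0:ℝ) 1)
    (hint : ∫ x, f₀ x ∂μ = v) :
    Gfun (gde μ f₀ v) 1 = Mtot μ f₀ v := by
  rw [Mtot, Gfun_one_eq hm hv hμ1 (gex_measurable hm) gex_nonneg (gex_le_one hm hv hμ1),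
    Gfun_one_eq hm hv hμ1 (gde_measurable hm) gde_nonneg (gde_le_one hm hv hμ1)]
  have hdiff : ∀ u, gex μ f₀ v u - gde μ f₀ v u = mfun μ f₀ u - v := by
    intro u
    rw [gex, gde]
    rcases le_total v (mfun μ f₀ u) with h | h
    · rw [max_eq_left (by linarith), max_eq_right (by linarith)]; ring
    · rw [max_eq_right (by linarith), max_eq_left (by linarith)]; ring
  have hIex := bounded_integrable hm hv hμ1 (gex_measurable hm) gex_nonneg
    (gex_le_one hm hv hμ1)
  have hIde := bounded_integrable hm hv hμ1 (gde_measurable hm) gde_nonneg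
    (gde_le_one hm hv hμ1)
  have h1 : ∫ u in Ioo (0:ℝ) 1, (gex μ f₀ v u - gde μ f₀ v u) = 0 := by
    have h2 : ∫ u in Ioo (0:ℝ) 1, (gex μ f₀ v u - gde μ f₀ v u)
        = ∫ u in Ioo (0:ℝ) 1, (mfun μ f₀ u - v) := by
      refine integral_congr_ae (ae_of_all _ fun u => hdiff u)
    rw [h2, integral_sub (bounded_integrable hm hv hμ1 (mfun_measurable μ hm)
      (mfun_nonneg μ) (mfun_le_one μ hμ1)) (integrable_const v),
      mfun_setIntegral μ hm hpin h01 hv.1 hint, integral_const,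
      measureReal_restrict_apply_univ, Real.volume_real_Ioo]
    norm_num
  have h3 := integral_sub hIex hIde
  rw [h1] at h3
  linarith [h3]

end Props

end Pairing


section Pairing2

variable {μ : Measure ℝ} {f₀ : ℝ → ℝ} {v : ℝ}
variable [IsFiniteMeasure μ] (hm : Monotone f₀) (hv : v ∈ Icc (0:ℝ) 1) (hμ1 : μ univ = 1)

include hm hv hμ1

lemma aA_pos {s : ℝ} (hs : s ∈ Ioo 0 (Mtot μ f₀ v)) : 0 < aA μ f₀ v s := by
  set gg := gex μ f₀ v with hgg
  have hgm : Measurable gg := gex_measurable hm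
  have hg1 : ∀ u, gg u ≤ 1 := gex_le_one hm hv hμ1
  by_contra h
  push_neg at h
  have h0 : gg (qfun gg s) = 0 := le_antisymm h (gex_nonneg _)
  set q := qfun gg s with hq
  have hqmem := qfun_mem hgm hg1 hs.1.le
  have hzero : ∀ t, q ≤ t → gg t = 0 :=
    fun t ht => le_antisymm (h0 ▸ gex_anti hm ht) (gex_nonneg t)
  have hnug : nug gg (Ioc q 1) = 0 := by
    rw [nug_apply hgm measurableSet_Ioc]
    have : ∫⁻ u in Ioc q 1 ∩ Ioo 0 1, ENNReal.ofReal (gg u)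
        = ∫⁻ u in Ioc q 1 ∩ Ioo 0 1, 0 := by
      refine setLIntegral_congr_fun (measurableSet_Ioc.inter measurableSet_Ioo)
        (fun t ht => ?_)
      rw [hzero t ht.1.1.le, ENNReal.ofReal_zero]
    rw [this, lintegral_zero]
  have hG1 : Gfun gg 1 = Gfun gg q := by
    rw [Gfun_add hgm hg1 hqmem.1.2, hnug, ENNReal.toReal_zero, add_zero]
  rw [Gfun_qfun hgm hg1 hs.1.le hs.2] at hG1
  exact absurd hG1.symm (ne_of_lt hs.2)

lemma bB_pos (hpin : ∀ x, f₀ (max x 0) = f₀ x) (h01 : ∀ x, f₀ x ∈ Icc (0:ℝ) 1)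
    (hint : ∫ x, f₀ x ∂μ = v) {s : ℝ} (hs : s ∈ Ioo 0 (Mtot μ f₀ v)) :
    0 < bB μ f₀ v s := by
  set gg := gde μ f₀ v with hgg
  have hgm : Measurable gg := gde_measurable hm
  have hg1 : ∀ u, gg u ≤ 1 := gde_le_one hm hv hμ1
  have hsM : s < Gfun gg 1 := by
    rw [Mtot_eq hm hv hμ1 hpin h01 hint]; exact hs.2
  by_contra h
  push_neg at h
  have h0 : gg (qfun gg s) = 0 := le_antisymm h (gde_nonneg _)
  set q := qfun gg s with hq
  have hqmem := qfun_mem hgm hg1 hs.1.le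
  have hzero : ∀ t, t ≤ q → gg t = 0 :=
    fun t ht => le_antisymm (h0 ▸ gde_mono hm ht) (gde_nonneg t)
  have hGq : Gfun gg q = 0 := by
    rw [Gfun, nug_apply hgm measurableSet_Iic]
    have : ∫⁻ u in Iic q ∩ Ioo 0 1, ENNReal.ofReal (gg u)
        = ∫⁻ u in Iic q ∩ Ioo 0 1, 0 := by
      refine setLIntegral_congr_fun (measurableSet_Iic.inter measurableSet_Ioo)
        (fun t ht => ?_)
      rw [hzero t ht.1, ENNReal.ofReal_zero]
    rw [this, lintegral_zero, ENNReal.toReal_zero]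
  rw [Gfun_qfun hgm hg1 hs.1.le hsM] at hGq
  exact absurd hGq (ne_of_gt hs.1)

lemma mfun_qex {s : ℝ} (hs : s ∈ Ioo 0 (Mtot μ f₀ v)) :
    mfun μ f₀ (qfun (gex μ f₀ v) s) = v + aA μ f₀ v s := by
  have hpos := aA_pos hm hv hμ1 hs
  have h1 : 0 < gex μ f₀ v (qfun (gex μ f₀ v) s) := hpos
  rw [gex_pos_iff] at h1
  rw [aA, gex, max_eq_left (by linarith)]
  ring

lemma mfun_qde (hpin : ∀ x, f₀ (max x 0) = f₀ x) (h01 : ∀ x, f₀ x ∈ Icc (0:ℝ) 1)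
    (hint : ∫ x, f₀ x ∂μ = v) {s : ℝ} (hs : s ∈ Ioo 0 (Mtot μ f₀ v)) :
    mfun μ f₀ (qfun (gde μ f₀ v) s) = v - bB μ f₀ v s := by
  have hpos := bB_pos hm hv hμ1 hpin h01 hint hs
  have h1 : 0 < gde μ f₀ v (qfun (gde μ f₀ v) s) := hpos
  rw [gde_pos_iff] at h1
  rw [bB, gde, max_eq_left (by linarith)]
  ring

lemma lam_mem (hpin : ∀ x, f₀ (max x 0) = f₀ x) (h01 : ∀ x, f₀ x ∈ Icc (0:ℝ) 1)
    (hint : ∫ x, f₀ x ∂μ = v) {s : ℝ} (hs : s ∈ Ioo 0 (Mtot μ f₀ v)) :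
    lam μ f₀ v s ∈ Ioo (0:ℝ) 1 := by
  have ha := aA_pos hm hv hμ1 hs
  have hb := bB_pos hm hv hμ1 hpin h01 hint hs
  constructor
  · rw [lam]; exact div_pos hb (by linarith)
  · rw [lam, div_lt_one (by linarith)]; linarith

lemma qex_lt_qde (hpin : ∀ x, f₀ (max x 0) = f₀ x) (h01 : ∀ x, f₀ x ∈ Icc (0:ℝ) 1)
    (hint : ∫ x, f₀ x ∂μ = v) {s : ℝ} (hs : s ∈ Ioo 0 (Mtot μ f₀ v)) :
    qfun (gex μ f₀ v) s < qfun (gde μ f₀ v) s := by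
  have ha := aA_pos hm hv hμ1 hs
  have hb := bB_pos hm hv hμ1 hpin h01 hint hs
  have h1 := mfun_qex hm hv hμ1 hs
  have h2 := mfun_qde hm hv hμ1 hpin h01 hint hs
  by_contra h
  push_neg at h
  have := mfun_anti μ hm h
  rw [h1, h2] at this
  linarith

lemma hfun_qde_le_qex (hpin : ∀ x, f₀ (max x 0) = f₀ x) (h01 : ∀ x, f₀ x ∈ Icc (0:ℝ) 1)
    (hint : ∫ x, f₀ x ∂μ = v) {s : ℝ} (hs : s ∈ Ioo 0 (Mtot μ f₀ v)) (x : ℝ) :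
    hfun f₀ (qfun (gde μ f₀ v) s) x ≤ hfun f₀ (qfun (gex μ f₀ v) s) x :=
  hfun_anti hm x (qex_lt_qde hm hv hμ1 hpin h01 hint hs).le

lemma gmix_integral (hpin : ∀ x, f₀ (max x 0) = f₀ x) (h01 : ∀ x, f₀ x ∈ Icc (0:ℝ) 1)
    (hint : ∫ x, f₀ x ∂μ = v) {s : ℝ} (hs : s ∈ Ioo 0 (Mtot μ f₀ v)) :
    ∫ x, gmix μ f₀ v s x ∂μ = v := by
  have ha := aA_pos hm hv hμ1 hs
  have hb := bB_pos hm hv hμ1 hpin h01 hint hs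
  have h1 := mfun_qex hm hv hμ1 hs
  have h2 := mfun_qde hm hv hμ1 hpin h01 hint hs
  have hI1 : Integrable (fun x => lam μ f₀ v s * hfun f₀ (qfun (gex μ f₀ v) s) x) μ :=
    (hfun_integrable μ _).const_mul _
  have hI2 : Integrable
      (fun x => (1 - lam μ f₀ v s) * hfun f₀ (qfun (gde μ f₀ v) s) x) μ :=
    (hfun_integrable μ _).const_mul _
  have : ∫ x, gmix μ f₀ v s x ∂μ
      = lam μ f₀ v s * mfun μ f₀ (qfun (gex μ f₀ v) s)
        + (1 - lam μ f₀ v s) * mfun μ f₀ (qfun (gde μ f₀ v) s) := by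
    rw [show (fun x => gmix μ f₀ v s x) = fun x =>
      (lam μ f₀ v s * hfun f₀ (qfun (gex μ f₀ v) s) x
        + (1 - lam μ f₀ v s) * hfun f₀ (qfun (gde μ f₀ v) s) x) from rfl]
    rw [integral_add hI1 hI2, integral_const_mul, integral_const_mul]
    rfl
  rw [this, h1, h2, lam]
  field_simp
  ring

end Pairing2


section Membership

/-- Abstract version of `CSet`. -/
def CSet' (cont : ℝ → Prop) (μ : Measure ℝ) (v : ℝ) : Set (ℝ → ℝ) :=
  {f | MonotoneOn f (Ici 0) ∧ (∀ x ∈ Ici (0:ℝ), f x ∈ Icc (0:ℝ) 1) ∧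
    (∀ x < (0:ℝ), f x = f 0) ∧
    (∀ x ∈ Ici (0:ℝ), cont x → ContinuousWithinAt f (Ici x) x) ∧
    ∫ x, f x ∂μ = v}

/-- Abstract version of `JSet`. -/
def JSet' (μ : Measure ℝ) : Set (ℝ → ℝ) :=
  {f | MonotoneOn f (Ici 0) ∧
    ∃ (β : ℝ) (J0 J1 : Set ℝ), β ∈ Ioo (0:ℝ) 1 ∧
      J0 ⊆ Ici 0 ∧ J1 ⊆ Ici 0 ∧ J0.OrdConnected ∧ J1.OrdConnected ∧ Disjoint J0 J1 ∧
      (J0 = ∅ ∨ 0 < μ J0) ∧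
      (J1 = ∅ ∨ ¬ BddAbove J1) ∧
      (J0.Nonempty → J1.Nonempty → sSup J0 = sInf J1) ∧
      ∀ x ∈ Ici (0:ℝ),
        f x = β * J0.indicator (fun _ => (1:ℝ)) x + J1.indicator (fun _ => (1:ℝ)) x}

variable {μ : Measure ℝ} {f₀ : ℝ → ℝ} {v : ℝ} {cont : ℝ → Prop}

lemma ordConn_J1 {h2 : ℝ → ℝ} (hm2 : Monotone h2) (h2le : ∀ x, h2 x ≤ 1) :
    {x | 0 ≤ x ∧ h2 x = 1}.OrdConnected := by
  constructor
  intro x hx y _ z hz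
  exact ⟨le_trans hx.1 hz.1, le_antisymm (h2le z) (by rw [← hx.2]; exact hm2 hz.1)⟩

lemma ordConn_J0 {h1 h2 : ℝ → ℝ} (hm1 : Monotone h1) (hm2 : Monotone h2)
    (h1le : ∀ x, h1 x ≤ 1) (h2le : ∀ x, h2 x ≤ 1) :
    {x | 0 ≤ x ∧ h1 x = 1 ∧ ¬ h2 x = 1}.OrdConnected := by
  constructor
  intro x hx y hy z hz
  refine ⟨le_trans hx.1 hz.1,
    le_antisymm (h1le z) (by rw [← hx.2.1]; exact hm1 hz.1), ?_⟩
  intro h2z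
  exact hy.2.2 (le_antisymm (h2le y) (by rw [← h2z]; exact hm2 hz.2))

lemma not_bddAbove_J1 {h2 : ℝ → ℝ} (hm2 : Monotone h2) (h2le : ∀ x, h2 x ≤ 1)
    (hne : {x | 0 ≤ x ∧ h2 x = 1}.Nonempty) :
    ¬ BddAbove {x | 0 ≤ x ∧ h2 x = 1} := by
  rintro ⟨b, hb⟩
  obtain ⟨y, hy0, hy2⟩ := hne
  have hz : max y b + 1 ∈ {x | 0 ≤ x ∧ h2 x = 1} := by
    refine ⟨by linarith [le_max_left y b], ?_⟩
    refine le_antisymm (h2le _) ?_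
    rw [← hy2]
    exact hm2 (by linarith [le_max_left y b])
  have h1 : max y b + 1 ≤ b := hb hz
  linarith [le_max_right y b]

lemma sSup_eq_sInf_J {h1 h2 : ℝ → ℝ} (hm1 : Monotone h1) (hm2 : Monotone h2)
    (h1le : ∀ x, h1 x ≤ 1) (h2le : ∀ x, h2 x ≤ 1)
    (hJ0 : {x | 0 ≤ x ∧ h1 x = 1 ∧ ¬ h2 x = 1}.Nonempty)
    (hJ1 : {x | 0 ≤ x ∧ h2 x = 1}.Nonempty) :
    sSup {x | 0 ≤ x ∧ h1 x = 1 ∧ ¬ h2 x = 1} = sInf {x | 0 ≤ x ∧ h2 x = 1} := by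
  set J0 := {x | 0 ≤ x ∧ h1 x = 1 ∧ ¬ h2 x = 1} with hJ0def
  set J1 := {x | 0 ≤ x ∧ h2 x = 1} with hJ1def
  have horder : ∀ x ∈ J0, ∀ y ∈ J1, x ≤ y := by
    intro x hx y hy
    by_contra hxy
    push_neg at hxy
    have h2xy : h2 y ≤ h2 x := hm2 hxy.le
    rw [hy.2] at h2xy
    exact hx.2.2 (le_antisymm (h2le x) h2xy)
  have hbdd0 : BddAbove J0 := ⟨hJ1.some, fun x hx => horder x hx _ hJ1.some_mem⟩
  have hbdd1 : BddBelow J1 := ⟨hJ0.some, fun y hy => horder _ hJ0.some_mem y hy⟩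
  refine le_antisymm (csSup_le hJ0 fun x hx => le_csInf hJ1 fun y hy => horder x hx y hy) ?_
  by_contra hlt
  push_neg at hlt
  obtain ⟨z, hz1, hz2⟩ := exists_between hlt
  obtain ⟨x₀, hx₀⟩ := hJ0
  have hxz : x₀ ≤ z := le_trans (le_csSup hbdd0 hx₀) hz1.le
  have hz0 : 0 ≤ z := le_trans hx₀.1 hxz
  have hz1' : h1 z = 1 := le_antisymm (h1le z) (by rw [← hx₀.2.1]; exact hm1 hxz)
  have hz2' : ¬ h2 z = 1 := by
    intro h2z
    have := csInf_le hbdd1 (show z ∈ J1 from ⟨hz0, h2z⟩)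
    linarith
  have := le_csSup hbdd0 (show z ∈ J0 from ⟨hz0, hz1', hz2'⟩)
  linarith

lemma J0_pos [IsFiniteMeasure μ] (hm : Monotone f₀) (hμ0 : μ (Iio 0) = 0)
    {u₁ u₂ : ℝ} (hle : u₁ ≤ u₂) (hlt : mfun μ f₀ u₂ < mfun μ f₀ u₁) :
    0 < μ {x | 0 ≤ x ∧ hfun f₀ u₁ x = 1 ∧ ¬ hfun f₀ u₂ x = 1} := by
  have hBA : Eset f₀ u₂ ⊆ Eset f₀ u₁ := by
    intro x hx
    have h2 : hfun f₀ u₂ x = 1 := hx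
    have hanti : hfun f₀ u₂ x ≤ hfun f₀ u₁ x := hfun_anti hm x hle
    rcases hfun_eq_or (f₀ := f₀) u₁ x with h | h
    · exfalso; rw [h2, h] at hanti; norm_num at hanti
    · exact h
  have hdiff : μ (Eset f₀ u₁ \ Eset f₀ u₂) = μ (Eset f₀ u₁) - μ (Eset f₀ u₂) :=
    measure_diff hBA (Eset_measurableSet u₂).nullMeasurableSet (measure_ne_top μ _)
  have hlt' : μ (Eset f₀ u₂) < μ (Eset f₀ u₁) := by
    rw [mfun_eq_toReal, mfun_eq_toReal] at hlt
    exact (ENNReal.toReal_lt_toReal (measure_ne_top μ _) (measure_ne_top μ _)).1 hlt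
  have hpos : 0 < μ (Eset f₀ u₁ \ Eset f₀ u₂) := by
    rw [hdiff]; exact tsub_pos_of_lt hlt'
  by_contra hc
  push_neg at hc
  have hc0 : μ {x | 0 ≤ x ∧ hfun f₀ u₁ x = 1 ∧ ¬ hfun f₀ u₂ x = 1} = 0 := le_antisymm hc (by simp)
  have hsub : Eset f₀ u₁ \ Eset f₀ u₂ ⊆
      {x | 0 ≤ x ∧ hfun f₀ u₁ x = 1 ∧ ¬ hfun f₀ u₂ x = 1} ∪ Iio 0 := by
    rintro x ⟨hx1, hx2⟩
    rcases le_or_gt 0 x with hx0 | hx0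
    · exact Or.inl ⟨hx0, hx1, hx2⟩
    · exact Or.inr hx0
  have := measure_mono_null hsub (measure_union_null hc0 hμ0)
  exact absurd this (ne_of_gt hpos)

/-- Membership of the simple layer functions (case `m(u) = v`). -/
lemma hfun_mem_CJ [IsFiniteMeasure μ] (hm : Monotone f₀) (hμ0 : μ (Iio 0) = 0)
    (hrc : ∀ a, 0 ≤ a → cont a → ContinuousWithinAt f₀ (Ici a) a)
    {u : ℝ} (hu : mfun μ f₀ u = v) :
    hfun f₀ u ∈ CSet' cont μ v ∩ JSet' μ := by
  have hmono := (hfun_mono (f₀ := f₀) u)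
  constructor
  · refine ⟨hmono.monotoneOn _, fun x _ => ⟨hfun_nonneg u x, hfun_le_one u x⟩,
      fun x hx => hfun_neg hx u, fun x hx hcx => hfun_rc hm hrc hx hcx u, hu⟩
  · refine ⟨hmono.monotoneOn _, 1/2, ∅, {x | 0 ≤ x ∧ hfun f₀ u x = 1},
      by norm_num, empty_subset _, fun x hx => hx.1, Set.ordConnected_empty,
      ordConn_J1 hmono (hfun_le_one u), disjoint_bot_left.mono_left (le_refl _), Or.inl rfl, ?_, ?_, ?_⟩
    · rcases eq_empty_or_nonempty {x | 0 ≤ x ∧ hfun f₀ u x = 1} with h | h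
      · exact Or.inl h
      · exact Or.inr (not_bddAbove_J1 hmono (hfun_le_one u) h)
    · intro h0 _
      exact absurd h0 (not_nonempty_empty)
    · intro x hx
      rw [indicator_empty]
      simp only [Pi.zero_apply, mul_zero, zero_add]
      rcases hfun_eq_or (f₀ := f₀) u x with h | h
      · rw [h, indicator_of_notMem]
        intro hmem
        exact absurd hmem.2 (by rw [h]; norm_num)
      · rw [h, indicator_of_mem (show x ∈ {x | 0 ≤ x ∧ hfun f₀ u x = 1} from ⟨hx, h⟩)]

/-- Membership of the two-step mixtures. -/
lemma gmix_mem_CJ [IsFiniteMeasure μ] (hm : Monotone f₀) (hμ0 : μ (Iio 0) = 0)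
    (hv : v ∈ Icc (0:ℝ) 1) (hμ1 : μ univ = 1)
    (hpin : ∀ x, f₀ (max x 0) = f₀ x) (h01 : ∀ x, f₀ x ∈ Icc (0:ℝ) 1)
    (hint : ∫ x, f₀ x ∂μ = v)
    (hrc : ∀ a, 0 ≤ a → cont a → ContinuousWithinAt f₀ (Ici a) a)
    {s : ℝ} (hs : s ∈ Ioo 0 (Mtot μ f₀ v)) :
    gmix μ f₀ v s ∈ CSet' cont μ v ∩ JSet' μ := by
  set u₁ := qfun (gex μ f₀ v) s with hu₁
  set u₂ := qfun (gde μ f₀ v) s with hu₂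
  have hlam := lam_mem hm hv hμ1 hpin h01 hint hs
  have hu12 : u₁ ≤ u₂ := (qex_lt_qde hm hv hμ1 hpin h01 hint hs).le
  have hm1 := hfun_mono (f₀ := f₀) u₁
  have hm2 := hfun_mono (f₀ := f₀) u₂
  have hh21 : ∀ x, hfun f₀ u₂ x ≤ hfun f₀ u₁ x := fun x => hfun_anti hm x hu12
  have hmlt : mfun μ f₀ u₂ < mfun μ f₀ u₁ := by
    rw [mfun_qex hm hv hμ1 hs, mfun_qde hm hv hμ1 hpin h01 hint hs]
    have := aA_pos hm hv hμ1 hs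
    have := bB_pos hm hv hμ1 hpin h01 hint hs
    linarith
  have hgmono : Monotone (gmix μ f₀ v s) := by
    intro x y hxy
    have e1 := hm1 hxy
    have e2 := hm2 hxy
    rw [gmix, gmix]
    have hl0 : (0:ℝ) ≤ lam μ f₀ v s := hlam.1.le
    have hl1 : (0:ℝ) ≤ 1 - lam μ f₀ v s := by linarith [hlam.2]
    nlinarith
  constructor
  · refine ⟨hgmono.monotoneOn _, fun x _ => ⟨?_, ?_⟩, fun x hx => ?_, fun x hx hcx => ?_,
      gmix_integral hm hv hμ1 hpin h01 hint hs⟩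
    · have := hfun_nonneg (f₀ := f₀) u₁ x
      have := hfun_nonneg (f₀ := f₀) u₂ x
      have hl0 : (0:ℝ) ≤ lam μ f₀ v s := hlam.1.le
      have hl1 : (0:ℝ) ≤ 1 - lam μ f₀ v s := by linarith [hlam.2]
      rw [gmix]
      positivity
    · have h1 := hfun_le_one (f₀ := f₀) u₁ x
      have h2 := hfun_le_one (f₀ := f₀) u₂ x
      have := hfun_nonneg (f₀ := f₀) u₁ x
      have := hfun_nonneg (f₀ := f₀) u₂ x
      have hl0 : (0:ℝ) ≤ lam μ f₀ v s := hlam.1.le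
      have hl1 : (0:ℝ) ≤ 1 - lam μ f₀ v s := by linarith [hlam.2]
      rw [gmix]
      nlinarith
    · rw [gmix, gmix, hfun_neg hx, hfun_neg hx]
    · exact ((continuousWithinAt_const).mul (hfun_rc hm hrc hx hcx u₁)).add
        ((continuousWithinAt_const).mul (hfun_rc hm hrc hx hcx u₂))
  · refine ⟨hgmono.monotoneOn _, lam μ f₀ v s,
      {x | 0 ≤ x ∧ hfun f₀ u₁ x = 1 ∧ ¬ hfun f₀ u₂ x = 1},
      {x | 0 ≤ x ∧ hfun f₀ u₂ x = 1},
      hlam, fun x hx => hx.1, fun x hx => hx.1,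
      ordConn_J0 hm1 hm2 (hfun_le_one u₁) (hfun_le_one u₂),
      ordConn_J1 hm2 (hfun_le_one u₂), ?_,
      Or.inr (J0_pos hm hμ0 hu12 hmlt), ?_, ?_, ?_⟩
    · rw [disjoint_left]
      rintro x ⟨_, _, hx2⟩ hx'
      exact hx2 hx'.2
    · rcases eq_empty_or_nonempty {x | 0 ≤ x ∧ hfun f₀ u₂ x = 1} with h | h
      · exact Or.inl h
      · exact Or.inr (not_bddAbove_J1 hm2 (hfun_le_one u₂) h)
    · intro hne0 hne1
      exact sSup_eq_sInf_J hm1 hm2 (hfun_le_one u₁) (hfun_le_one u₂) hne0 hne1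
    · intro x hx
      have hnm0 : ∀ (hval : hfun f₀ u₁ x = 0),
          x ∉ {x | 0 ≤ x ∧ hfun f₀ u₁ x = 1 ∧ ¬ hfun f₀ u₂ x = 1} := by
        intro hval hmem
        obtain ⟨_, hA, _⟩ := hmem
        rw [hval] at hA; norm_num at hA
      have hnm1 : ∀ (hval : hfun f₀ u₂ x = 0), x ∉ {x | 0 ≤ x ∧ hfun f₀ u₂ x = 1} := by
        intro hval hmem
        obtain ⟨_, hA⟩ := hmem
        rw [hval] at hA; norm_num at hA
      rw [gmix]
      rcases hfun_eq_or (f₀ := f₀) u₂ x with h2 | h2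
      · rcases hfun_eq_or (f₀ := f₀) u₁ x with h1 | h1
        · rw [h1, h2, indicator_of_notMem (hnm0 h1), indicator_of_notMem (hnm1 h2)]
          ring
        · rw [h1, h2,
            indicator_of_mem (show x ∈ {x | 0 ≤ x ∧ hfun f₀ u₁ x = 1 ∧ ¬ hfun f₀ u₂ x = 1}
              from ⟨hx, h1, by rw [h2]; norm_num⟩),
            indicator_of_notMem (hnm1 h2)]
          ring
      · have h1 : hfun f₀ u₁ x = 1 := by
          have hcmp := hh21 x
          rw [h2] at hcmp
          exact le_antisymm (hfun_le_one u₁ x) hcmp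
        rw [h1, h2,
          indicator_of_notMem (show x ∉ {x | 0 ≤ x ∧ hfun f₀ u₁ x = 1 ∧ ¬ hfun f₀ u₂ x = 1}
            from fun hmem => hmem.2.2 h2),
          indicator_of_mem (show x ∈ {x | 0 ≤ x ∧ hfun f₀ u₂ x = 1} from ⟨hx, h2⟩)]
        ring

/-- Membership of the constant function `v`. -/
lemma const_mem_CJ [IsFiniteMeasure μ] (hμ0 : μ (Iio 0) = 0) (hμ1 : μ univ = 1)
    (hv : v ∈ Icc (0:ℝ) 1) :
    (fun _ : ℝ => v) ∈ CSet' cont μ v ∩ JSet' μ := by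
  have hconst : MonotoneOn (fun _ : ℝ => v) (Ici 0) := fun x _ y _ _ => le_rfl
  have hIci_pos : 0 < μ (Ici 0) := by
    by_contra h
    push_neg at h
    have h0 : μ (Ici 0) = 0 := le_antisymm h (by simp)
    have : μ univ ≤ μ (Iio 0) + μ (Ici 0) := by
      rw [← Iio_union_Ici (a := (0:ℝ))]
      exact measure_union_le _ _
    rw [hμ0, hμ1, h0] at this
    norm_num at this
  have hCmem : (fun _ : ℝ => v) ∈ CSet' cont μ v := by
    refine ⟨hconst, fun x _ => hv, fun _ _ => rfl, fun x _ _ => continuousWithinAt_const, ?_⟩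
    rw [integral_const, measureReal_def, hμ1, ENNReal.toReal_one, one_smul]
  refine ⟨hCmem, hconst, ?_⟩
  rcases eq_or_lt_of_le hv.1 with hv0 | hv0
  · -- v = 0
    refine ⟨1/2, ∅, ∅, by norm_num, empty_subset _, empty_subset _,
      Set.ordConnected_empty, Set.ordConnected_empty, empty_disjoint _ |>.mono_left (le_refl _),
      Or.inl rfl, Or.inl rfl, fun h _ => absurd h not_nonempty_empty, ?_⟩
    intro x _
    rw [indicator_empty]
    simp [← hv0]
  rcases eq_or_lt_of_le hv.2 with hv1 | hv1
  · -- v = 1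
    refine ⟨1/2, ∅, Ici 0, by norm_num, empty_subset _, le_refl _,
      Set.ordConnected_empty, ordConnected_Ici, empty_disjoint _ |>.mono_left (le_refl _),
      Or.inl rfl, Or.inr ?_, fun h _ => absurd h not_nonempty_empty, ?_⟩
    · rintro ⟨b, hb⟩
      have h1 := hb (show max b 0 + 1 ∈ Ici (0:ℝ) by
        simp only [mem_Ici]; linarith [le_max_right b 0])
      have h2 : b ≤ max b 0 := le_max_left b 0
      linarith [h1]
    · intro x hx
      rw [indicator_empty, indicator_of_mem (show x ∈ Ici (0:ℝ) from hx)]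
      simp [hv1]
  · -- 0 < v < 1
    refine ⟨v, Ici 0, ∅, ⟨hv0, hv1⟩, le_refl _, empty_subset _,
      ordConnected_Ici, Set.ordConnected_empty, disjoint_empty _ |>.mono_left (le_refl _),
      Or.inr hIci_pos, Or.inl rfl, fun _ h => absurd h not_nonempty_empty, ?_⟩
    intro x hx
    rw [indicator_empty, indicator_of_mem (show x ∈ Ici (0:ℝ) from hx)]
    simp

end Membership


section Bridge

/-- The σ-algebra generated by evaluations at positive points. -/
def bigMS : MeasurableSpace (ℝ → ℝ) :=
  ⨆ x ∈ Ioi (0:ℝ), MeasurableSpace.comap (fun f : ℝ → ℝ => f x) inferInstance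

lemma measurable_eval_big {x : ℝ} (hx : 0 < x) :
    @Measurable (ℝ → ℝ) ℝ bigMS _ fun f => f x := by
  rw [measurable_iff_comap_le]
  exact le_iSup₂ (f := fun (x : ℝ) (_ : x ∈ Ioi (0:ℝ)) =>
    MeasurableSpace.comap (fun f : ℝ → ℝ => f x) inferInstance) x hx

lemma measurable_into_big {α : Type*} [MeasurableSpace α] {F : α → ℝ → ℝ}
    (hF : ∀ x, 0 < x → Measurable fun a => F a x) :
    @Measurable α (ℝ → ℝ) _ bigMS F := by
  rw [measurable_iff_comap_le, bigMS, MeasurableSpace.comap_iSup]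
  refine iSup_le fun x => ?_
  rw [MeasurableSpace.comap_iSup]
  refine iSup_le fun hx => ?_
  rw [MeasurableSpace.comap_comp]
  exact measurable_iff_comap_le.1 (hF x hx)

variable {Ω : Type*} [MeasurableSpace Ω] {P : Measure Ω} [IsProbabilityMeasure P]
  {φ : Ω → ℝ}

lemma muD_apply (hφm : Measurable φ) {s : Set ℝ} (hs : MeasurableSet s) :
    muD P φ s = ∫⁻ ω in φ ⁻¹' s, ENNReal.ofReal (φ ω) ∂P := by
  rw [muD, Measure.map_apply hφm hs, withDensity_apply _ (hφm hs)]

lemma muD_univ (hφm : Measurable φ) (hφint : Integrable φ P)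
    (hφpos : ∀ᵐ ω ∂P, 0 < φ ω) (hφ1 : ∫ ω, φ ω ∂P = 1) : muD P φ univ = 1 := by
  rw [muD_apply hφm MeasurableSet.univ, preimage_univ, Measure.restrict_univ,
    ← ofReal_integral_eq_lintegral_ofReal hφint (hφpos.mono fun ω h => h.le), hφ1,
    ENNReal.ofReal_one]

lemma muD_Iio (hφm : Measurable φ) : muD P φ (Iio 0) = 0 := by
  rw [muD_apply hφm measurableSet_Iio]
  rw [setLIntegral_congr_fun (hφm measurableSet_Iio)
    (fun ω (hω : φ ω < 0) => ENNReal.ofReal_eq_zero.2 hω.le), lintegral_zero]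

lemma cdf_mono : Monotone (cdf P φ) := fun a b hab =>
  ENNReal.toReal_mono (measure_ne_top _ _)
    (measure_mono fun ω (h : φ ω ≤ a) => le_trans h hab)

lemma cdf_nonneg (x : ℝ) : 0 ≤ cdf P φ x := ENNReal.toReal_nonneg

lemma cdf_contAt_zero (hφm : Measurable φ) (hφpos : ∀ᵐ ω ∂P, 0 < φ ω) :
    ContinuousAt (cdf P φ) 0 := by
  have h0 : P {ω | φ ω ≤ 0} = 0 :=
    measure_mono_null (fun ω (h : φ ω ≤ 0) => (not_lt.2 h : ¬ 0 < φ ω)) (ae_iff.1 hφpos)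
  have hcdf0 : cdf P φ 0 = 0 := by rw [cdf, h0, ENNReal.toReal_zero]
  have hseq : Tendsto (fun n : ℕ => P {ω | φ ω ≤ 1/((n:ℝ)+1)}) atTop (𝓝 0) := by
    have hInter : (⋂ n : ℕ, {ω | φ ω ≤ 1/((n:ℝ)+1)}) = {ω | φ ω ≤ 0} := by
      ext ω
      simp only [mem_iInter, mem_setOf_eq]
      constructor
      · intro h
        by_contra hpos
        push_neg at hpos
        obtain ⟨n, hn⟩ := exists_nat_one_div_lt hpos
        exact absurd (h n) (not_le.2 hn)
      · intro h n
        refine le_trans h (by positivity)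
    have hanti : Antitone fun n : ℕ => {ω | φ ω ≤ 1/((n:ℝ)+1)} := by
      intro n m hnm ω (hω : φ ω ≤ 1/((m:ℝ)+1))
      have hc : ((n:ℝ)+1) ≤ ((m:ℝ)+1) := by
        have : (n:ℝ) ≤ (m:ℝ) := by exact_mod_cast hnm
        linarith
      exact le_trans hω (one_div_le_one_div_of_le (by positivity) hc)
    have key := tendsto_measure_iInter_atTop (μ := P)
      (s := fun n : ℕ => {ω | φ ω ≤ 1/((n:ℝ)+1)})
      (fun n => (hφm measurableSet_Iic).nullMeasurableSet) hanti ⟨0, measure_ne_top _ _⟩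
    rw [hInter, h0] at key
    exact key
  rw [ContinuousAt, hcdf0, Metric.tendsto_nhds]
  intro ε hε
  obtain ⟨n, hn⟩ := (hseq.eventually_lt_const
    (show (0:ℝ≥0∞) < ENNReal.ofReal ε from ENNReal.ofReal_pos.2 hε)).exists
  rw [Metric.eventually_nhds_iff]
  refine ⟨1/((n:ℝ)+1), by positivity, fun y hy => ?_⟩
  rw [Real.dist_eq, sub_zero] at hy
  rw [Real.dist_eq, sub_zero, abs_of_nonneg (cdf_nonneg y)]
  have hy' : y ≤ 1/((n:ℝ)+1) := le_trans (le_abs_self y) hy.le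
  calc cdf P φ y ≤ cdf P φ (1/((n:ℝ)+1)) := cdf_mono hy'
  _ < ε := ENNReal.toReal_lt_of_lt_ofReal hn

lemma CSet_eq_CSet' (v : ℝ) :
    CSet P φ v = CSet' (fun x => ContinuousAt (cdf P φ) x) (muD P φ) v := rfl

lemma JSet_eq_JSet' : JSet P φ = JSet' (muD P φ) := rfl

end Bridge


lemma wmix_eq {a b lamv h1 h2 : ℝ} (ha : 0 < a) (hb : 0 < b) (hl : lamv = b/(a+b)) :
    (a⁻¹ + b⁻¹) * (lamv * h1 + (1 - lamv) * h2) = h1 * a⁻¹ + h2 * b⁻¹ := by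
  subst hl
  have hab : a + b ≠ 0 := by positivity
  field_simp
  ring

lemma ofReal_wmix {a b lamv h1 h2 : ℝ} (ha : 0 < a) (hb : 0 < b) (hl : lamv = b/(a+b))
    (h10 : 0 ≤ h1) (h20 : 0 ≤ h2) :
    ENNReal.ofReal (a⁻¹ + b⁻¹) * ENNReal.ofReal (lamv * h1 + (1 - lamv) * h2)
      = ENNReal.ofReal h1 * ENNReal.ofReal (a⁻¹) + ENNReal.ofReal h2 * ENNReal.ofReal (b⁻¹) := by
  rw [← ENNReal.ofReal_mul (by positivity), wmix_eq ha hb hl,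
    ENNReal.ofReal_add (by positivity) (by positivity),
    ENNReal.ofReal_mul h10, ENNReal.ofReal_mul h20]

end IntRep


/-- Lemma 5.2: every `f₀ ∈ C` is a mixture of elements of `C ∩ 𝒥`:
there exists a probability measure `η` on `C ∩ 𝒥` (with the σ-algebra generated by the
evaluation maps `f ↦ f(x)`, `x ∈ (0,∞)`) such that `f₀(x) = ∫ f(x) η(df)` for all
`x ≥ 0`. -/
theorem integral_representation_of_C
    {Ω : Type*} [MeasurableSpace Ω] (P : Measure Ω) [IsProbabilityMeasure P]
    (hP : Atomless P)
    (φ : Ω → ℝ) (hφm : Measurable φ) (hφint : Integrable φ P)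
    (hφpos : ∀ᵐ ω ∂P, 0 < φ ω) (hφ1 : ∫ ω, φ ω ∂P = 1)
    (v : ℝ) (hv : v ∈ Icc (0:ℝ) 1)
    (f₀ : ℝ → ℝ) (hf₀ : f₀ ∈ CSet P φ v) :
    letI : MeasurableSpace (ℝ → ℝ) :=
      ⨆ x ∈ Ioi (0:ℝ), MeasurableSpace.comap (fun f : ℝ → ℝ => f x) inferInstance
    ∃ η : Measure ↥(CSet P φ v ∩ JSet P φ), IsProbabilityMeasure η ∧
      ∀ x : ℝ, 0 ≤ x → f₀ x = ∫ g, (g : ℝ → ℝ) x ∂η := by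
  classical
  letI : MeasurableSpace (ℝ → ℝ) := IntRep.bigMS
  -- basic facts about μ = muD P φ
  have hμuniv : muD P φ univ = 1 := IntRep.muD_univ hφm hφint hφpos hφ1
  haveI hfinμ : IsFiniteMeasure (muD P φ) :=
    ⟨by rw [hμuniv]; exact ENNReal.one_lt_top⟩
  have hμ0 : muD P φ (Iio 0) = 0 := IntRep.muD_Iio hφm
  obtain ⟨hf₀mono, hf₀01, hf₀pin, hf₀rc, hf₀int⟩ := hf₀
  have hpin : ∀ x, f₀ (max x 0) = f₀ x := by
    intro x
    rcases le_or_gt 0 x with h | h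
    · rw [max_eq_left h]
    · rw [max_eq_right h.le, hf₀pin x h]
  have hm : Monotone f₀ := by
    intro x y hxy
    rcases le_or_gt 0 x with hx | hx
    · exact hf₀mono hx (le_trans hx hxy) hxy
    · rcases le_or_gt 0 y with hy | hy
      · rw [hf₀pin x hx]
        exact hf₀mono self_mem_Ici hy hy
      · rw [hf₀pin x hx, hf₀pin y hy]
  have h01 : ∀ x, f₀ x ∈ Icc (0:ℝ) 1 := by
    intro x
    rw [← hpin x]
    exact hf₀01 _ (le_max_right x 0)
  have hrc : ∀ a, 0 ≤ a → ContinuousAt (cdf P φ) a → ContinuousWithinAt f₀ (Ici a) a :=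
    fun a ha hca => hf₀rc a ha hca
  -- abbreviations (not using `set` to keep definitional control)
  have hg1m : Measurable (IntRep.gex (muD P φ) f₀ v) := IntRep.gex_measurable hm
  have hg2m : Measurable (IntRep.gde (muD P φ) f₀ v) := IntRep.gde_measurable hm
  have hg1b : ∀ u, IntRep.gex (muD P φ) f₀ v u ≤ 1 := IntRep.gex_le_one hm hv hμuniv
  have hg2b : ∀ u, IntRep.gde (muD P φ) f₀ v u ≤ 1 := IntRep.gde_le_one hm hv hμuniv
  have hbad1 := IntRep.bad_null_anti hg1m hg1b (IntRep.gex_anti hm)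
  have hbad2 := IntRep.bad_null_mono hg2m hg2b (IntRep.gde_mono hm)
  have hM2 : IntRep.Gfun (IntRep.gde (muD P φ) f₀ v) 1 = IntRep.Mtot (muD P φ) f₀ v :=
    IntRep.Mtot_eq hm hv hμuniv hpin h01 hf₀int
  -- membership facts
  have hmemT : ∀ u, IntRep.mfun (muD P φ) f₀ u = v →
      IntRep.hfun f₀ u ∈ CSet P φ v ∩ JSet P φ :=
    fun u hu => IntRep.hfun_mem_CJ hm hμ0 hrc hu
  have hmemG : ∀ s, s ∈ Ioo 0 (IntRep.Mtot (muD P φ) f₀ v) →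
      IntRep.gmix (muD P φ) f₀ v s ∈ CSet P φ v ∩ JSet P φ :=
    fun s hs => IntRep.gmix_mem_CJ hm hμ0 hv hμuniv hpin h01 hf₀int hrc hs
  have hmemC : (fun _ : ℝ => v) ∈ CSet P φ v ∩ JSet P φ :=
    IntRep.const_mem_CJ hμ0 hμuniv hv
  -- parameter sets
  set T' : Set ℝ := Ioo 0 1 ∩ {u | IntRep.mfun (muD P φ) f₀ u = v} with hT'def
  have hT'meas : MeasurableSet T' :=
    measurableSet_Ioo.inter ((IntRep.mfun_measurable (muD P φ) hm) (measurableSet_singleton v))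
  -- raw maps into the function space
  set Hraw : ℝ → (ℝ → ℝ) := fun u => if u ∈ T' then IntRep.hfun f₀ u else fun _ => v
    with hHrawdef
  have hHrawmem : ∀ u, Hraw u ∈ CSet P φ v ∩ JSet P φ := by
    intro u
    by_cases h : u ∈ T'
    · rw [hHrawdef]; simp only [if_pos h]; exact hmemT u h.2
    · rw [hHrawdef]; simp only [if_neg h]; exact hmemC
  set Graw : ℝ → (ℝ → ℝ) := fun s =>
    if s ∈ Ioo 0 (IntRep.Mtot (muD P φ) f₀ v) then IntRep.gmix (muD P φ) f₀ v s
    else fun _ => v with hGrawdef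
  have hGrawmem : ∀ s, Graw s ∈ CSet P φ v ∩ JSet P φ := by
    intro s
    by_cases h : s ∈ Ioo 0 (IntRep.Mtot (muD P φ) f₀ v)
    · rw [hGrawdef]; simp only [if_pos h]; exact hmemG s h
    · rw [hGrawdef]; simp only [if_neg h]; exact hmemC
  set Hfun : ℝ → ↥(CSet P φ v ∩ JSet P φ) := fun u => ⟨Hraw u, hHrawmem u⟩ with hHfundef
  set Gmap : ℝ → ↥(CSet P φ v ∩ JSet P φ) := fun s => ⟨Graw s, hGrawmem s⟩ with hGmapdef
  -- measurability of the maps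
  have hHm : Measurable Hfun := by
    refine Measurable.subtype_mk (IntRep.measurable_into_big fun x hx => ?_)
    have heq : (fun u => Hraw u x)
        = fun u => if u ∈ T' then IntRep.hfun f₀ u x else v := by
      funext u
      rw [hHrawdef]
      by_cases h : u ∈ T' <;> simp [h]
    rw [heq]
    exact Measurable.ite hT'meas (IntRep.hfun_measurable_u hm x) measurable_const
  have hGm : Measurable Gmap := by
    refine Measurable.subtype_mk (IntRep.measurable_into_big fun x hx => ?_)
    have heq : (fun s => Graw s x)
        = fun s => if s ∈ Ioo 0 (IntRep.Mtot (muD P φ) f₀ v)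
          then IntRep.gmix (muD P φ) f₀ v s x else v := by
      funext s
      rw [hGrawdef]
      by_cases h : s ∈ Ioo 0 (IntRep.Mtot (muD P φ) f₀ v) <;> simp [h]
    rw [heq]
    refine Measurable.ite measurableSet_Ioo ?_ measurable_const
    -- gmix s x is measurable in s
    have hq1 : Measurable (IntRep.qfun (IntRep.gex (muD P φ) f₀ v)) :=
      IntRep.qfun_measurable hg1m
    have hq2 : Measurable (IntRep.qfun (IntRep.gde (muD P φ) f₀ v)) :=
      IntRep.qfun_measurable hg2m
    have hlamm : Measurable (IntRep.lam (muD P φ) f₀ v) := by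
      have ha : Measurable (IntRep.aA (muD P φ) f₀ v) := hg1m.comp hq1
      have hb : Measurable (IntRep.bB (muD P φ) f₀ v) := hg2m.comp hq2
      exact hb.div (ha.add hb)
    exact (hlamm.mul ((IntRep.hfun_measurable_u hm x).comp hq1)).add
      ((measurable_const.sub hlamm).mul ((IntRep.hfun_measurable_u hm x).comp hq2))
  -- the weight density and the two measures
  set wden : ℝ → ℝ≥0∞ := fun s => ENNReal.ofReal ((IntRep.aA (muD P φ) f₀ v s)⁻¹)
      + ENNReal.ofReal ((IntRep.bB (muD P φ) f₀ v s)⁻¹) with hwdendef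
  have hwm : Measurable wden := by
    have ha : Measurable (IntRep.aA (muD P φ) f₀ v) :=
      hg1m.comp (IntRep.qfun_measurable hg1m)
    have hb : Measurable (IntRep.bB (muD P φ) f₀ v) :=
      hg2m.comp (IntRep.qfun_measurable hg2m)
    exact (ENNReal.measurable_ofReal.comp ha.inv).add
      (ENNReal.measurable_ofReal.comp hb.inv)
  set ρ1 : Measure ℝ := volume.restrict T' with hρ1def
  set ρ2 : Measure ℝ :=
    (volume.restrict (Ioo 0 (IntRep.Mtot (muD P φ) f₀ v))).withDensity wden with hρ2def
  set η : Measure ↥(CSet P φ v ∩ JSet P φ) := (ρ1.map Hfun) + (ρ2.map Gmap) with hηdef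
  -- partition of (0,1)
  set A1 : Set ℝ := {u | 0 < IntRep.gex (muD P φ) f₀ v u} ∩ Ioo 0 1 with hA1def
  set A2 : Set ℝ := {u | 0 < IntRep.gde (muD P φ) f₀ v u} ∩ Ioo 0 1 with hA2def
  have hA1meas : MeasurableSet A1 := (hg1m measurableSet_Ioi).inter measurableSet_Ioo
  have hA2meas : MeasurableSet A2 := (hg2m measurableSet_Ioi).inter measurableSet_Ioo
  have hunion : Ioo (0:ℝ) 1 = T' ∪ (A1 ∪ A2) := by
    ext u
    simp only [hT'def, hA1def, hA2def, mem_union, mem_inter_iff, mem_setOf_eq]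
    constructor
    · intro hu
      rcases lt_trichotomy (IntRep.mfun (muD P φ) f₀ u) v with h | h | h
      · exact Or.inr (Or.inr ⟨(IntRep.gde_pos_iff u).2 h, hu⟩)
      · exact Or.inl ⟨hu, h⟩
      · exact Or.inr (Or.inl ⟨(IntRep.gex_pos_iff u).2 h, hu⟩)
    · rintro (⟨hu, _⟩ | ⟨_, hu⟩ | ⟨_, hu⟩) <;> exact hu
  have hdisj1 : Disjoint T' (A1 ∪ A2) := by
    rw [disjoint_left]
    rintro u ⟨_, hu2⟩ (⟨hu3, _⟩ | ⟨hu3, _⟩)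
    · have h3 : v < IntRep.mfun (muD P φ) f₀ u := (IntRep.gex_pos_iff u).1 hu3
      have h2 : IntRep.mfun (muD P φ) f₀ u = v := hu2
      linarith
    · have h3 : IntRep.mfun (muD P φ) f₀ u < v := (IntRep.gde_pos_iff u).1 hu3
      have h2 : IntRep.mfun (muD P φ) f₀ u = v := hu2
      linarith
  have hdisj2 : Disjoint A1 A2 := by
    rw [disjoint_left]
    rintro u ⟨hu1, _⟩ ⟨hu2, _⟩
    have h1 : v < IntRep.mfun (muD P φ) f₀ u := (IntRep.gex_pos_iff u).1 hu1
    have h2 : IntRep.mfun (muD P φ) f₀ u < v := (IntRep.gde_pos_iff u).1 hu2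
    linarith
  -- the key integral computation
  have key : ∀ ψ : ℝ → ℝ≥0∞, Measurable ψ →
      (∫⁻ s in Ioo 0 (IntRep.Mtot (muD P φ) f₀ v),
        (ψ (IntRep.qfun (IntRep.gex (muD P φ) f₀ v) s)
          * ENNReal.ofReal ((IntRep.gex (muD P φ) f₀ v
              (IntRep.qfun (IntRep.gex (muD P φ) f₀ v) s))⁻¹)
        + ψ (IntRep.qfun (IntRep.gde (muD P φ) f₀ v) s)
          * ENNReal.ofReal ((IntRep.gde (muD P φ) f₀ v
              (IntRep.qfun (IntRep.gde (muD P φ) f₀ v) s))⁻¹)) ∂volume)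
      = ∫⁻ u in A1, ψ u ∂volume + ∫⁻ u in A2, ψ u ∂volume := by
    intro ψ hψ
    rw [lintegral_add_left (show Measurable fun s =>
      ψ (IntRep.qfun (IntRep.gex (muD P φ) f₀ v) s)
        * ENNReal.ofReal ((IntRep.gex (muD P φ) f₀ v
            (IntRep.qfun (IntRep.gex (muD P φ) f₀ v) s))⁻¹) from
      (hψ.comp (IntRep.qfun_measurable hg1m)).mul
        (ENNReal.measurable_ofReal.comp ((hg1m.comp (IntRep.qfun_measurable hg1m)).inv)))]
    congr 1
    · exact IntRep.Qmain hg1m IntRep.gex_nonneg hg1b hbad1 hψ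
    · rw [← hM2]
      exact IntRep.Qmain hg2m IntRep.gde_nonneg hg2b hbad2 hψ
  -- total mass of ρ2
  have hρ2univ : ρ2 univ = volume A1 + volume A2 := by
    rw [hρ2def, withDensity_apply _ MeasurableSet.univ, Measure.restrict_univ]
    have hkey1 := key (fun _ => (1:ℝ≥0∞)) measurable_const
    simp only [one_mul, setLIntegral_one] at hkey1
    rw [← hkey1]
    refine setLIntegral_congr_fun measurableSet_Ioo (fun s hs => ?_)
    simp only [hwdendef]
    rfl
  -- η is a probability measure
  have hηuniv : η univ = 1 := by
    have hmap1 : (ρ1.map Hfun) univ = volume T' := by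
      rw [Measure.map_apply hHm MeasurableSet.univ, preimage_univ, hρ1def,
        Measure.restrict_apply_univ]
    have hmap2 : (ρ2.map Gmap) univ = volume A1 + volume A2 := by
      rw [Measure.map_apply hGm MeasurableSet.univ, preimage_univ, hρ2univ]
    have hvol : volume (Ioo (0:ℝ) 1) = volume T' + (volume A1 + volume A2) := by
      rw [hunion, measure_union hdisj1 (hA1meas.union hA2meas),
        measure_union hdisj2 hA2meas]
    rw [hηdef, Measure.add_apply, hmap1, hmap2, ← hvol, Real.volume_Ioo]
    norm_num
  haveI hprob : IsProbabilityMeasure η := ⟨hηuniv⟩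
  -- measurability of evaluations on the subtype
  have evalK : ∀ x : ℝ, 0 ≤ x →
      Measurable fun k : ↥(CSet P φ v ∩ JSet P φ) => (k : ℝ → ℝ) x := by
    intro x hx
    rcases eq_or_lt_of_le hx with heq | hpos
    · have hev : ∀ n : ℕ,
          Measurable fun k : ↥(CSet P φ v ∩ JSet P φ) => (k : ℝ → ℝ) (1/((n:ℝ)+1)) :=
        fun n => (IntRep.measurable_eval_big (by positivity)).comp measurable_subtype_coe
      have hlim : Tendsto
          (fun (n : ℕ) (k : ↥(CSet P φ v ∩ JSet P φ)) => (k : ℝ → ℝ) (1/((n:ℝ)+1))) atTop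
          (𝓝 fun k : ↥(CSet P φ v ∩ JSet P φ) => (k : ℝ → ℝ) x) := by
      

        rw [tendsto_pi_nhds]
        intro k
        have hk : ContinuousWithinAt (k : ℝ → ℝ) (Ici 0) 0 :=
          k.2.1.2.2.2.1 0 self_mem_Ici (IntRep.cdf_contAt_zero hφm hφpos)
        have hseq : Tendsto (fun n : ℕ => 1/((n:ℝ)+1)) atTop (𝓝[Ici 0] 0) := by
          rw [tendsto_nhdsWithin_iff]
          exact ⟨tendsto_one_div_add_atTop_nhds_zero_nat,
            Eventually.of_forall fun n => mem_Ici.2 (by positivity)⟩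
        rw [← heq]
        exact hk.tendsto.comp hseq
      exact measurable_of_tendsto_metrizable hev hlim
    · exact (IntRep.measurable_eval_big hpos).comp measurable_subtype_coe
  -- the main pointwise identity in lintegral form
  have main : ∀ x : ℝ, 0 ≤ x →
      ∫⁻ k : ↥(CSet P φ v ∩ JSet P φ), ENNReal.ofReal ((k : ℝ → ℝ) x) ∂η
        = ENNReal.ofReal (f₀ x) := by
    intro x hx
    set ψ : ℝ → ℝ≥0∞ := fun u => ENNReal.ofReal (IntRep.hfun f₀ u x) with hψdef
    have hψm : Measurable ψ :=
      ENNReal.measurable_ofReal.comp (IntRep.hfun_measurable_u hm x)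
    have hΨm : Measurable
        fun k : ↥(CSet P φ v ∩ JSet P φ) => ENNReal.ofReal ((k : ℝ → ℝ) x) :=
      ENNReal.measurable_ofReal.comp (evalK x hx)
    have hpart1 : (∫⁻ k, ENNReal.ofReal ((k : ℝ → ℝ) x) ∂(ρ1.map Hfun))
        = ∫⁻ u in T', ψ u ∂volume := by
      rw [lintegral_map hΨm hHm, hρ1def]
      refine setLIntegral_congr_fun hT'meas (fun u hu => ?_)
      show ENNReal.ofReal ((Hraw u) x) = ψ u
      have hH : Hraw u = IntRep.hfun f₀ u := by
        rw [hHrawdef]; simp only [if_pos hu]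
      rw [hH]
    have hcongr2 : ∀ s ∈ Ioo 0 (IntRep.Mtot (muD P φ) f₀ v),
        wden s * ENNReal.ofReal ((Graw s) x)
        = ψ (IntRep.qfun (IntRep.gex (muD P φ) f₀ v) s)
            * ENNReal.ofReal ((IntRep.gex (muD P φ) f₀ v
                (IntRep.qfun (IntRep.gex (muD P φ) f₀ v) s))⁻¹)
          + ψ (IntRep.qfun (IntRep.gde (muD P φ) f₀ v) s)
            * ENNReal.ofReal ((IntRep.gde (muD P φ) f₀ v
                (IntRep.qfun (IntRep.gde (muD P φ) f₀ v) s))⁻¹) := by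
      intro s hs
      have ha := IntRep.aA_pos hm hv hμuniv hs
      have hb := IntRep.bB_pos hm hv hμuniv hpin h01 hf₀int hs
      have hG : Graw s = IntRep.gmix (muD P φ) f₀ v s := by
        rw [hGrawdef]; simp only [if_pos hs]
      rw [hG]
      show (ENNReal.ofReal ((IntRep.aA (muD P φ) f₀ v s)⁻¹)
          + ENNReal.ofReal ((IntRep.bB (muD P φ) f₀ v s)⁻¹))
          * ENNReal.ofReal (IntRep.lam (muD P φ) f₀ v s
              * IntRep.hfun f₀ (IntRep.qfun (IntRep.gex (muD P φ) f₀ v) s) x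
            + (1 - IntRep.lam (muD P φ) f₀ v s)
              * IntRep.hfun f₀ (IntRep.qfun (IntRep.gde (muD P φ) f₀ v) s) x) = _
      rw [← ENNReal.ofReal_add (by positivity) (by positivity),
        IntRep.ofReal_wmix ha hb
          (show IntRep.lam (muD P φ) f₀ v s = IntRep.bB (muD P φ) f₀ v s
            / (IntRep.aA (muD P φ) f₀ v s + IntRep.bB (muD P φ) f₀ v s) from rfl)
          (IntRep.hfun_nonneg _ _) (IntRep.hfun_nonneg _ _)]
      rfl
    have hpart2 : (∫⁻ k, ENNReal.ofReal ((k : ℝ → ℝ) x) ∂(ρ2.map Gmap))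
        = ∫⁻ u in A1, ψ u ∂volume + ∫⁻ u in A2, ψ u ∂volume := by
      rw [lintegral_map hΨm hGm, hρ2def,
        lintegral_withDensity_eq_lintegral_mul _ hwm
          (show Measurable fun s => ENNReal.ofReal ((Graw s) x) from hΨm.comp hGm),
        ← key ψ hψm]
      refine setLIntegral_congr_fun measurableSet_Ioo (fun s hs => ?_)
      simp only [Pi.mul_apply]
      exact hcongr2 s hs
    have hsum : (∫⁻ u in T', ψ u ∂volume)
        + ((∫⁻ u in A1, ψ u ∂volume) + (∫⁻ u in A2, ψ u ∂volume))
        = ∫⁻ u in Ioo 0 1, ψ u ∂volume := by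
      rw [hunion, lintegral_union (hA1meas.union hA2meas) hdisj1,
        lintegral_union hA2meas hdisj2]
    have hfinal : ∫⁻ u in Ioo 0 1, ψ u ∂volume = ENNReal.ofReal (f₀ x) := by
      have hne : ∀ᵐ u ∂(volume : Measure ℝ), u ≠ f₀ x := by
        have := measure_eq_zero_iff_ae_notMem.1 (measure_singleton (f₀ x) (μ := volume))
        filter_upwards [this] with u hu
        exact fun hu' => hu (mem_singleton_iff.2 hu')
      have heqind : ∫⁻ u in Ioo 0 1, ψ u ∂volume
          = ∫⁻ u in Ioo 0 1, (Iio (f₀ x)).indicator (fun _ => (1:ℝ≥0∞)) u ∂volume := by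
        refine lintegral_congr_ae (ae_restrict_of_ae ?_)
        filter_upwards [hne] with u hu
        rcases lt_trichotomy u (f₀ x) with h | h | h
        · rw [hψdef]
          simp only []
          rw [IntRep.hfun_one_of_lt hm hx h, indicator_of_mem (mem_Iio.2 h),
            ENNReal.ofReal_one]
        · exact absurd h hu
        · rw [hψdef]
          simp only []
          rw [IntRep.hfun_zero_of_lt hm hx h,
            indicator_of_notMem (fun hmem => absurd (mem_Iio.1 hmem) (not_lt.2 h.le)),
            ENNReal.ofReal_zero]
      rw [heqind, lintegral_indicator measurableSet_Iio,
        Measure.restrict_restrict measurableSet_Iio, setLIntegral_one]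
      have hset : Iio (f₀ x) ∩ Ioo (0:ℝ) 1 = Ioo 0 (f₀ x) := by
        ext u
        simp only [mem_inter_iff, mem_Iio, mem_Ioo]
        constructor
        · rintro ⟨h1, h2, _⟩; exact ⟨h2, h1⟩
        · rintro ⟨h1, h2⟩
          exact ⟨h2, h1, lt_of_lt_of_le h2 (h01 x).2⟩
      rw [hset, Real.volume_Ioo, sub_zero]
    rw [hηdef, lintegral_add_measure, hpart1, hpart2, hsum, hfinal]
  -- conclusion
  refine ⟨η, hprob, fun x hx => ?_⟩
  have h1 : ∫ k, (k : ℝ → ℝ) x ∂η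
      = (∫⁻ k, ENNReal.ofReal ((k : ℝ → ℝ) x) ∂η).toReal := by
    rw [integral_eq_lintegral_of_nonneg_ae
      (ae_of_all _ fun k => (k.2.1.2.1 x hx).1) ((evalK x hx).aestronglyMeasurable)]
  rw [main x hx, ENNReal.toReal_ofReal (h01 x).1] at h1
  exact h1.symm
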